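/- arXiv:1704.03954 — 3 statements merged into one kernel-verified Lean document; each statement's English description precedes it below -/
import Mathlib

section
/- Let (C^1, …, C^k) be an admissible family in ℝ^n, let u ∈ ℝ^n and v ∈ ℝ^k, and let I(u,v) := {i ∈ {1,…,k} : σ_{C^i}(u) + v_i = σ_{Q(C^1,…,C^k)}(u,v)} (equality in the extended reals). Then the exposed face of Q(C^1,…,C^k) in direction (u,v) satisfies F_{Q(C^1,…,C^k)}(u, v) = conv(⋃_{i ∈ I(u,v)} F_{C^i}(u) × {e^i}). -/
open Pointwise Set

noncomputable section

/-- The recession cone of a set. -/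
def recCone {E : Type*} [AddCommGroup E] [Module ℝ E] (S : Set E) : Set E :=
  {d | ∀ x ∈ S, ∀ t : ℝ, 0 ≤ t → x + t • d ∈ S}

/-- An admissible family: each member is a nonempty closed convex set and all members share
the same recession cone. -/
def Admissible {n k : ℕ} (C : Fin k → Set (Fin n → ℝ)) : Prop :=
  (∀ i, (C i).Nonempty) ∧ (∀ i, IsClosed (C i)) ∧ (∀ i, Convex ℝ (C i)) ∧
    ∀ i j, recCone (C i) = recCone (C j)

/-- The Cayley embedding `Q(C¹,…,Cᵏ) = conv(⋃ᵢ Cⁱ × {eⁱ})`. -/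
def CayleyQ {n k : ℕ} (C : Fin k → Set (Fin n → ℝ)) :
    Set ((Fin n → ℝ) × (Fin k → ℝ)) :=
  convexHull ℝ (⋃ i, (C i) ×ˢ ({Pi.single i 1} : Set (Fin k → ℝ)))

def dotp {n : ℕ} (u x : Fin n → ℝ) : ℝ := ∑ j, u j * x j

/-- The support function of a set, with values in the extended reals. -/
def supportFn {n : ℕ} (S : Set (Fin n → ℝ)) (u : Fin n → ℝ) : EReal :=
  sSup ((fun x => ((dotp u x : ℝ) : EReal)) '' S)

/-- The support function of a subset of `ℝⁿ × ℝᵏ`. -/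
def supportFn2 {n k : ℕ} (Q : Set ((Fin n → ℝ) × (Fin k → ℝ)))
    (u : Fin n → ℝ) (v : Fin k → ℝ) : EReal :=
  sSup ((fun p => ((dotp u p.1 + dotp v p.2 : ℝ) : EReal)) '' Q)

/-- The face of `S` exposed by `u`. -/
def exposedFace {n : ℕ} (S : Set (Fin n → ℝ)) (u : Fin n → ℝ) : Set (Fin n → ℝ) :=
  {x ∈ S | ((dotp u x : ℝ) : EReal) = supportFn S u}

/- ### auxiliary lemmas -/

lemma dotp_add {n : ℕ} (u x y : Fin n → ℝ) : dotp u (x + y) = dotp u x + dotp u y := by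
  simp [dotp, mul_add, Finset.sum_add_distrib]

lemma dotp_smul {n : ℕ} (u : Fin n → ℝ) (c : ℝ) (x : Fin n → ℝ) :
    dotp u (c • x) = c * dotp u x := by
  unfold dotp
  rw [Finset.mul_sum]
  exact Finset.sum_congr rfl fun j _ => by simp; ring

lemma dotp_sum {n : ℕ} (u : Fin n → ℝ) {ι : Type*} (t : Finset ι) (f : ι → Fin n → ℝ) :
    dotp u (∑ i ∈ t, f i) = ∑ i ∈ t, dotp u (f i) := by
  classical
  induction t using Finset.induction with
  | empty => simp [dotp]
  | insert a s h ih => rw [Finset.sum_insert h, dotp_add, ih, Finset.sum_insert h]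

lemma dotp_single {k : ℕ} (v : Fin k → ℝ) (i : Fin k) :
    dotp v (Pi.single i 1) = v i := by
  simp [dotp, Pi.single_apply, mul_ite]

lemma pair_sum {n k : ℕ} (w : Fin k → ℝ) (x : Fin k → Fin n → ℝ) :
    ∑ i, w i • ((x i, Pi.single i 1) : (Fin n → ℝ) × (Fin k → ℝ)) = (∑ i, w i • x i, w) := by
  have h1 : ∀ i : Fin k, w i • (Pi.single i 1 : Fin k → ℝ) = Pi.single i (w i) := by
    intro i; funext l
    by_cases h : l = i <;> simp [h, Pi.single_apply]
  apply Prod.ext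
  · simp [Prod.fst_sum]
  · simp only [Prod.snd_sum, Prod.smul_mk]
    simp_rw [h1]
    exact Finset.univ_sum_single w

/-- Characterisation of membership in the Cayley embedding. -/
lemma mem_cayleyQ {n k : ℕ} {C : Fin k → Set (Fin n → ℝ)} (hne : ∀ i, (C i).Nonempty)
    (hcv : ∀ i, Convex ℝ (C i)) (p : (Fin n → ℝ) × (Fin k → ℝ)) :
    p ∈ CayleyQ C ↔ ∃ x : Fin k → Fin n → ℝ, (∀ i, x i ∈ C i) ∧ (∀ i, 0 ≤ p.2 i) ∧
      (∑ i, p.2 i = 1) ∧ p.1 = ∑ i, p.2 i • x i := by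
  classical
  constructor
  · -- CayleyQ ⊆ R via convexHull_min
    have hsub : CayleyQ C ⊆ {p : (Fin n → ℝ) × (Fin k → ℝ) |
        ∃ x : Fin k → Fin n → ℝ, (∀ i, x i ∈ C i) ∧ (∀ i, 0 ≤ p.2 i) ∧
          (∑ i, p.2 i = 1) ∧ p.1 = ∑ i, p.2 i • x i} := by
      apply convexHull_min
      · rintro ⟨c, y⟩ hmem
        simp only [Set.mem_iUnion, Set.mem_prod, Set.mem_singleton_iff] at hmem
        obtain ⟨i, hc, hy⟩ := hmem
        subst hy
        refine ⟨Function.update (fun j => (hne j).some) i c, fun j => ?_, fun j => ?_, ?_, ?_⟩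
        · rcases eq_or_ne j i with rfl | hj
          · simpa using hc
          · simpa [Function.update_of_ne hj] using (hne j).some_mem
        · simp [Pi.single_apply]; positivity
        · simp [Pi.single_apply]
        · simp only [Pi.single_apply, ite_smul, one_smul, zero_smul]
          rw [Finset.sum_ite_eq' Finset.univ i]
          simp
      · -- convexity of R
        rintro ⟨p1, p2⟩ ⟨x, hx, hw0, hw1, hrep⟩ ⟨q1, q2⟩ ⟨x', hx', hw0', hw1', hrep'⟩
          a b ha hb hab
        rcases eq_or_lt_of_le ha with rfl | ha'
        · simp only [zero_add] at hab; subst hab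
          simpa using ⟨x', hx', hw0', hw1', hrep'⟩
        rcases eq_or_lt_of_le hb with rfl | hb'
        · simp only [add_zero] at hab; subst hab
          simpa using ⟨x, hx, hw0, hw1, hrep⟩
        set r2 : Fin k → ℝ := fun j => a * p2 j + b * q2 j with hr2
        have hr2eq : (a • (p1, p2) + b • ((q1, q2) : (Fin n → ℝ) × (Fin k → ℝ))).2 = r2 := by
          funext j; simp [hr2]
        have hr2nn : ∀ j, 0 ≤ r2 j := fun j => by
          have := hw0 j; have := hw0' j; positivity
        refine ⟨fun j => if h : r2 j = 0 then x j else
            (r2 j)⁻¹ • ((a * p2 j) • x j + (b * q2 j) • x' j), fun j => ?_, ?_, ?_, ?_⟩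
        · by_cases h : r2 j = 0
          · simpa [h] using hx j
          · simp only [h, dif_neg, not_false_iff]
            have key : (r2 j)⁻¹ • ((a * p2 j) • x j + (b * q2 j) • x' j)
                = (a * p2 j / r2 j) • x j + (b * q2 j / r2 j) • x' j := by
              rw [smul_add, smul_smul, smul_smul, ← div_eq_inv_mul, ← div_eq_inv_mul]
            rw [key]
            refine (hcv j) (hx j) (hx' j)
              (div_nonneg (mul_nonneg ha (hw0 j)) (hr2nn j))
              (div_nonneg (mul_nonneg hb (hw0' j)) (hr2nn j)) ?_
            rw [← add_div]
            exact div_self h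
        · rw [hr2eq]; exact hr2nn
        · rw [hr2eq, hr2]
          rw [Finset.sum_add_distrib, ← Finset.mul_sum, ← Finset.mul_sum, hw1, hw1']
          simpa using hab
        · rw [hr2eq]
          show a • p1 + b • q1 = _
          rw [show p1 = ∑ i, p2 i • x i from hrep, show q1 = ∑ i, q2 i • x' i from hrep',
            Finset.smul_sum, Finset.smul_sum, ← Finset.sum_add_distrib]
          refine Finset.sum_congr rfl fun j _ => ?_
          by_cases h : r2 j = 0
          · have hp2 : p2 j = 0 := by
              have h1 : 0 ≤ a * p2 j := by have := hw0 j; positivity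
              have h2 : 0 ≤ b * q2 j := by have := hw0' j; positivity
              have := (add_eq_zero_iff_of_nonneg h1 h2).1 h
              nlinarith [hw0 j]
            have hq2 : q2 j = 0 := by
              have h1 : 0 ≤ a * p2 j := by have := hw0 j; positivity
              have h2 : 0 ≤ b * q2 j := by have := hw0' j; positivity
              have := (add_eq_zero_iff_of_nonneg h1 h2).1 h
              nlinarith [hw0' j]
            simp [h, hp2, hq2]
          · simp only [h, dif_neg, not_false_iff]
            rw [smul_inv_smul₀ h]; simp [smul_smul]
    exact fun h => hsub h
  · rintro ⟨x, hx, hw0, hw1, hrep⟩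
    have hp : p = ∑ i ∈ Finset.univ.filter (fun i => p.2 i ≠ 0),
        p.2 i • ((x i, Pi.single i 1) : (Fin n → ℝ) × (Fin k → ℝ)) := by
      rw [Finset.sum_filter_of_ne (fun i _ h => by
        intro h0; exact h (by simp [h0]))]
      rw [pair_sum]
      exact Prod.ext hrep rfl
    rw [hp]
    refine (convex_convexHull ℝ _).sum_mem (fun i _ => hw0 i) ?_ (fun i hi => ?_)
    · rw [Finset.sum_filter_of_ne (fun i _ h => by intro h0; exact h h0)]
      exact hw1
    · exact subset_convexHull ℝ _ (Set.mem_iUnion.2 ⟨i, by simp [hx i]⟩)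

lemma valQ_le {n k : ℕ} (C : Fin k → Set (Fin n → ℝ)) (u : Fin n → ℝ) (v : Fin k → ℝ)
    {p : (Fin n → ℝ) × (Fin k → ℝ)} (hp : p ∈ CayleyQ C) :
    ((dotp u p.1 + dotp v p.2 : ℝ) : EReal) ≤ supportFn2 (CayleyQ C) u v :=
  le_sSup ⟨p, hp, rfl⟩

lemma mem_single_cayleyQ {n k : ℕ} (C : Fin k → Set (Fin n → ℝ)) {i : Fin k}
    {x : Fin n → ℝ} (hx : x ∈ C i) :
    ((x, Pi.single i 1) : (Fin n → ℝ) × (Fin k → ℝ)) ∈ CayleyQ C :=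
  subset_convexHull ℝ _ (Set.mem_iUnion.2 ⟨i, by simp [hx]⟩)

lemma supp_add_le {n k : ℕ} (C : Fin k → Set (Fin n → ℝ)) (u : Fin n → ℝ) (v : Fin k → ℝ)
    (i : Fin k) :
    supportFn (C i) u + ((v i : ℝ) : EReal) ≤ supportFn2 (CayleyQ C) u v := by
  rw [← EReal.le_sub_iff_add_le (Or.inl (EReal.coe_ne_bot _)) (Or.inl (EReal.coe_ne_top _))]
  refine sSup_le ?_
  rintro _ ⟨x, hx, rfl⟩
  rw [EReal.le_sub_iff_add_le (Or.inl (EReal.coe_ne_bot _)) (Or.inl (EReal.coe_ne_top _))]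
  have := valQ_le C u v (mem_single_cayleyQ C hx)
  rw [dotp_single] at this
  rw [← EReal.coe_add]
  exact this

/-- The exposed faces of the Cayley embedding:
`F_Q(u,v) = conv(⋃_{i ∈ I(u,v)} F_{Cⁱ}(u) × {eⁱ})`. -/
theorem stmt14 {n k : ℕ} (C : Fin k → Set (Fin n → ℝ)) (hC : Admissible C)
    (u : Fin n → ℝ) (v : Fin k → ℝ) :
    {p ∈ CayleyQ C |
        ((dotp u p.1 + dotp v p.2 : ℝ) : EReal) = supportFn2 (CayleyQ C) u v} =
      convexHull ℝ (⋃ i ∈ {i : Fin k |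
          supportFn (C i) u + ((v i : ℝ) : EReal) = supportFn2 (CayleyQ C) u v},
        (exposedFace (C i) u) ×ˢ ({Pi.single i 1} : Set (Fin k → ℝ))) := by
  classical
  obtain ⟨hne, _hcl, hcv, _hrec⟩ := hC
  set M := supportFn2 (CayleyQ C) u v with hM
  apply Set.Subset.antisymm
  · rintro p ⟨hpQ, hval⟩
    obtain ⟨x, hx, hw0, hw1, hrep⟩ := (mem_cayleyQ hne hcv p).1 hpQ
    set m : ℝ := dotp u p.1 + dotp v p.2 with hm
    -- per-index value bound
    have hle : ∀ i, dotp u (x i) + v i ≤ m := by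
      intro i
      have h1 : ((dotp u (x i) : ℝ) : EReal) ≤ supportFn (C i) u := le_sSup ⟨x i, hx i, rfl⟩
      have h2 : ((dotp u (x i) + v i : ℝ) : EReal) ≤ M := by
        calc ((dotp u (x i) + v i : ℝ) : EReal)
            = ((dotp u (x i) : ℝ) : EReal) + ((v i : ℝ) : EReal) := EReal.coe_add _ _
          _ ≤ supportFn (C i) u + ((v i : ℝ) : EReal) := add_le_add_left h1 _
          _ ≤ M := supp_add_le C u v i
      rw [← hval] at h2
      exact_mod_cast h2
    -- the value is the convex combination of the per-index values
    have hmval : m = ∑ i, p.2 i * (dotp u (x i) + v i) := by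
      have h1 : dotp u p.1 = ∑ i, p.2 i * dotp u (x i) := by
        rw [hrep, dotp_sum]
        exact Finset.sum_congr rfl fun i _ => dotp_smul u _ _
      have h2 : dotp v p.2 = ∑ i, p.2 i * v i := by
        simp [dotp, mul_comm]
      rw [hm, h1, h2, ← Finset.sum_add_distrib]
      exact Finset.sum_congr rfl fun i _ => by ring
    have hzero : ∀ i, p.2 i * (m - (dotp u (x i) + v i)) = 0 := by
      have hsum : ∑ i, p.2 i * (m - (dotp u (x i) + v i)) = 0 := by
        simp only [mul_sub]
        rw [Finset.sum_sub_distrib, ← Finset.sum_mul, hw1, one_mul, ← hmval]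
        simp
      intro i
      have := (Finset.sum_eq_zero_iff_of_nonneg (fun i _ =>
        mul_nonneg (hw0 i) (by linarith [hle i]))).1 hsum i (Finset.mem_univ i)
      exact this
    -- for weights ≠ 0 the value is achieved
    have hkey : ∀ i, p.2 i ≠ 0 → (supportFn (C i) u + ((v i : ℝ) : EReal) = M ∧
        x i ∈ exposedFace (C i) u) := by
      intro i hi
      have hveq : dotp u (x i) + v i = m := by
        have := hzero i
        rcases mul_eq_zero.1 this with h | h
        · exact absurd h hi
        · linarith
      have h1 : ((dotp u (x i) : ℝ) : EReal) ≤ supportFn (C i) u := le_sSup ⟨x i, hx i, rfl⟩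
      have hMge : (m : EReal) ≤ supportFn (C i) u + ((v i : ℝ) : EReal) := by
        calc (m : EReal) = ((dotp u (x i) + v i : ℝ) : EReal) := by rw [hveq]
          _ = ((dotp u (x i) : ℝ) : EReal) + ((v i : ℝ) : EReal) := EReal.coe_add _ _
          _ ≤ supportFn (C i) u + ((v i : ℝ) : EReal) := add_le_add_left h1 _
      have hIeq : supportFn (C i) u + ((v i : ℝ) : EReal) = M :=
        le_antisymm (supp_add_le C u v i) (hval ▸ hMge)
      refine ⟨hIeq, hx i, le_antisymm h1 ?_⟩
      -- supportFn (C i) u ≤ dotp u (x i)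
      have : supportFn (C i) u + ((v i : ℝ) : EReal)
          ≤ ((dotp u (x i) : ℝ) : EReal) + ((v i : ℝ) : EReal) := by
        rw [hIeq, ← EReal.coe_add]
        rw [← hveq] at hval
        exact le_of_eq (hval.symm ▸ rfl)
      have h2 := (EReal.le_sub_iff_add_le (Or.inl (EReal.coe_ne_bot _))
        (Or.inl (EReal.coe_ne_top _))).2 this
      calc supportFn (C i) u ≤ ((dotp u (x i) : ℝ) : EReal) + ((v i : ℝ) : EReal)
            - ((v i : ℝ) : EReal) := h2
        _ = ((dotp u (x i) : ℝ) : EReal) := by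
            rw [← EReal.coe_add, ← EReal.coe_sub]
            norm_num
    -- now assemble the convex combination
    have hp : p = ∑ i ∈ Finset.univ.filter (fun i => p.2 i ≠ 0),
        p.2 i • ((x i, Pi.single i 1) : (Fin n → ℝ) × (Fin k → ℝ)) := by
      rw [Finset.sum_filter_of_ne (fun i _ h => by intro h0; exact h (by simp [h0]))]
      rw [pair_sum]
      exact Prod.ext hrep rfl
    rw [hp]
    refine (convex_convexHull ℝ _).sum_mem (fun i _ => hw0 i) ?_ (fun i hi => ?_)
    · rw [Finset.sum_filter_of_ne (fun i _ h => by intro h0; exact h h0)]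
      exact hw1
    · have hi' : p.2 i ≠ 0 := (Finset.mem_filter.1 hi).2
      obtain ⟨hIi, hxi⟩ := hkey i hi'
      exact subset_convexHull ℝ _ (Set.mem_iUnion₂.2 ⟨i, hIi, by simp [hxi]⟩)
  · apply convexHull_min
    · rintro ⟨x, y⟩ hmem
      obtain ⟨i, hIi, hxF, hy⟩ : ∃ i, (supportFn (C i) u + ((v i : ℝ) : EReal) = M) ∧
          x ∈ exposedFace (C i) u ∧ y = Pi.single i 1 := by
        obtain ⟨i, hIi, hmem'⟩ := Set.mem_iUnion₂.1 hmem
        exact ⟨i, hIi, hmem'.1, hmem'.2⟩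
      subst hy
      obtain ⟨hxC, hxs⟩ := hxF
      refine ⟨mem_single_cayleyQ C hxC, ?_⟩
      rw [dotp_single, EReal.coe_add, hxs, hIi]
    · -- the exposed face of Q is convex
      rintro p ⟨hpQ, hpv⟩ q ⟨hqQ, hqv⟩ a b ha hb hab
      refine ⟨(convex_convexHull ℝ _) hpQ hqQ ha hb hab, ?_⟩
      have hvals : dotp u p.1 + dotp v p.2 = dotp u q.1 + dotp v q.2 :=
        EReal.coe_eq_coe_iff.1 (hpv.trans hqv.symm)
      have hcomb : dotp u (a • p + b • q).1 + dotp v (a • p + b • q).2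
          = a * (dotp u p.1 + dotp v p.2) + b * (dotp u q.1 + dotp v q.2) := by
        have h1 : (a • p + b • q).1 = a • p.1 + b • q.1 := rfl
        have h2 : (a • p + b • q).2 = a • p.2 + b • q.2 := rfl
        rw [h1, h2, dotp_add, dotp_add, dotp_smul, dotp_smul, dotp_smul, dotp_smul]
        ring
      rw [hcomb, ← hvals]
      have : a * (dotp u p.1 + dotp v p.2) + b * (dotp u p.1 + dotp v p.2)
          = dotp u p.1 + dotp v p.2 := by rw [← add_mul, hab, one_mul]
      rw [this]
      exact hpv
end
end

section
/- Let A be a real m×n matrix, let b^1, …, b^k ∈ ℝ^m, and let P^i := {x ∈ ℝ^n : A x ≤ b^i componentwise}, each assumed nonempty. Let r := rank(A) and ℬ := {B ⊆ {1,…,m} : |B| = r and the submatrix A_B of rows of A indexed by B has rank r}. For B ⊆ {1,…,m} and c ∈ ℝ^m let P(B, c) := {x ∈ ℝ^n : (A x)_ρ ≤ c_ρ for all ρ ∈ B}. Assume that for every c ∈ ℝ^n there exists B ∈ ℬ such that sup{⟨c, x⟩ : x ∈ P(B, b^i)} = sup{⟨c, x⟩ : x ∈ P^i} (equality in the extended reals)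 for every i ∈ {1,…,k}. Then conv(⋃_{i=1}^k P^i × {e^i}) = {(x, y) ∈ ℝ^n × ℝ^k : y ∈ Δ^k and A x ≤ Σ_{i=1}^k y_i b^i componentwise}; that is, formulation (10) is ideal. -/
open Pointwise Set

noncomputable section

set_option linter.unusedSectionVars false
set_option maxHeartbeats 1600000

namespace Stmt15Aux


variable {E : Type*} [NormedAddCommGroup E] [NormedSpace ℝ E] [FiniteDimensional ℝ E]

def coneSet {ι : Type*} [Fintype ι] (v : ι → E) : Set E :=
  {x | ∃ t : ι → ℝ, (∀ i, 0 ≤ t i) ∧ x = ∑ i, t i • v i}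

lemma mem_coneSet_self {ι : Type*} [Fintype ι] (v : ι → E) (p : ι) : v p ∈ coneSet v := by
  classical
  refine ⟨Pi.single p 1, fun i => ?_, ?_⟩
  · rcases eq_or_ne i p with rfl | h <;> simp [Pi.single_apply, *]
  · simp [Pi.single_apply, ite_smul, Finset.sum_ite_eq']

lemma coneSet_add {ι : Type*} [Fintype ι] {v : ι → E} {x y : E}
    (hx : x ∈ coneSet v) (hy : y ∈ coneSet v) : x + y ∈ coneSet v := by
  obtain ⟨t, ht, rfl⟩ := hx
  obtain ⟨s, hs, rfl⟩ := hy
  exact ⟨t + s, fun i => add_nonneg (ht i) (hs i), by simp [add_smul, Finset.sum_add_distrib]⟩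

lemma coneSet_smul {ι : Type*} [Fintype ι] {v : ι → E} {x : E} {c : ℝ}
    (hc : 0 ≤ c) (hx : x ∈ coneSet v) : c • x ∈ coneSet v := by
  obtain ⟨t, ht, rfl⟩ := hx
  exact ⟨c • t, fun i => mul_nonneg hc (ht i), by simp [Finset.smul_sum, smul_smul]⟩

lemma coneSet_zero {ι : Type*} [Fintype ι] (v : ι → E) : (0 : E) ∈ coneSet v :=
  ⟨0, fun _ => le_rfl, by simp⟩

lemma coneSet_convex {ι : Type*} [Fintype ι] (v : ι → E) : Convex ℝ (coneSet v) := by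
  intro x hx y hy a c ha hc _
  exact coneSet_add (coneSet_smul ha hx) (coneSet_smul hc hy)

lemma isClosed_coneSet_of_li {ι : Type*} [Fintype ι] {v : ι → E}
    (hv : LinearIndependent ℝ v) : IsClosed (coneSet v) := by
  classical
  set L : (ι → ℝ) →ₗ[ℝ] E :=
    { toFun := fun t => ∑ i, t i • v i
      map_add' := fun t s => by simp [add_smul, Finset.sum_add_distrib]
      map_smul' := fun c t => by simp [Finset.smul_sum, smul_smul] } with hL
  have hker : LinearMap.ker L = ⊥ := by
    rw [LinearMap.ker_eq_bot']
    intro t ht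
    exact funext fun i => Fintype.linearIndependent_iff.mp hv t ht i
  obtain ⟨g, hg⟩ := L.exists_leftInverse_of_injective hker
  have hgl : ∀ t, g (L t) = t := fun t => by
    have := LinearMap.congr_fun hg t; simpa using this
  have hS : IsClosed {t : ι → ℝ | ∀ i, 0 ≤ t i} := by
    have : {t : ι → ℝ | ∀ i, 0 ≤ t i} = ⋂ i, {t | 0 ≤ t i} := by
      ext t; simp [Set.mem_iInter]
    rw [this]
    exact isClosed_iInter fun i => isClosed_le continuous_const (continuous_apply i)
  have himg : coneSet v = (LinearMap.range L : Set E) ∩ g ⁻¹' {t | ∀ i, 0 ≤ t i} := by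
    ext x
    constructor
    · rintro ⟨t, ht, rfl⟩
      refine ⟨⟨t, rfl⟩, ?_⟩
      rw [Set.mem_preimage, show (∑ i, t i • v i) = L t from rfl, hgl]
      exact ht
    · rintro ⟨⟨t, rfl⟩, hx⟩
      rw [Set.mem_preimage, hgl] at hx
      exact ⟨t, hx, rfl⟩
  rw [himg]
  exact (Submodule.closed_of_finiteDimensional _).inter
    (hS.preimage g.continuous_of_finiteDimensional)




variable {E : Type*} [NormedAddCommGroup E] [NormedSpace ℝ E] [FiniteDimensional ℝ E]

lemma sum_extend {ι : Type*} [Fintype ι] (s : Finset ι) (f : ι → E) (w : ι → ℝ)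
    (hw : ∀ i ∉ s, w i = 0) : ∑ i, w i • f i = ∑ i : s, w (i : ι) • f (i : ι) := by
  rw [Finset.sum_coe_sort s (fun i => w i • f i)]
  exact (Finset.sum_subset (Finset.subset_univ s) (fun i _ hi => by simp [hw i hi])).symm

lemma exists_li_rep {ι : Type*} [Fintype ι] (v : ι → E) :
    ∀ (N : ℕ) (t : ι → ℝ), (∀ i, 0 ≤ t i) →
      (Finset.univ.filter fun i => t i ≠ 0).card ≤ N →
    ∃ s : Finset ι, LinearIndependent ℝ (fun i : s => v i) ∧
      ∃ u : ι → ℝ, (∀ i, 0 ≤ u i) ∧ (∀ i, i ∉ s → u i = 0) ∧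
        ∑ i, u i • v i = ∑ i, t i • v i := by
  classical
  intro N
  induction N with
  | zero =>
    intro t ht0 hcard
    have hall : ∀ i, t i = 0 := by
      intro i
      by_contra h
      have : i ∈ Finset.univ.filter fun i => t i ≠ 0 := by simp [h]
      have := Finset.card_pos.mpr ⟨i, this⟩
      omega
    refine ⟨∅, ?_, t, ht0, fun i _ => hall i, rfl⟩
    exact linearIndependent_empty_type
  | succ N ih =>
    intro t ht0 hcard
    set s : Finset ι := Finset.univ.filter fun i => t i ≠ 0 with hs
    by_cases hli : LinearIndependent ℝ (fun i : s => v i)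
    · refine ⟨s, hli, t, ht0, fun i hi => ?_, rfl⟩
      by_contra h
      exact hi (by simp [hs, h])
    · obtain ⟨c, hcsum, i₁, hi₁⟩ := Fintype.not_linearIndependent_iff.mp hli
      -- get a coefficient vector with a positive entry
      obtain ⟨c, hcsum, i₁, hi₁⟩ :
          ∃ c : s → ℝ, (∑ i, c i • v i = 0) ∧ ∃ i, 0 < c i := by
        rcases lt_or_gt_of_ne hi₁ with h | h
        · exact ⟨-c, by simpa using hcsum, i₁, by simpa using h⟩
        · exact ⟨c, hcsum, i₁, h⟩
      set pos : Finset s := Finset.univ.filter fun i => 0 < c i with hpos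
      have hposne : pos.Nonempty := ⟨i₁, by simp [hpos, hi₁]⟩
      obtain ⟨i₀, hi₀mem, hi₀min⟩ :=
        pos.exists_min_image (fun i => t i / c i) hposne
      have hci₀ : 0 < c i₀ := by simpa [hpos] using hi₀mem
      set α : ℝ := t i₀ / c i₀ with hα
      have hα0 : 0 ≤ α := div_nonneg (ht0 _) hci₀.le
      -- extension of c by zero
      set ce : ι → ℝ := fun i => if h : i ∈ s then c ⟨i, h⟩ else 0 with hce
      have hce_sum : ∑ i, ce i • v i = 0 := by
        have h1 : ∑ i, ce i • v i = ∑ i ∈ s, ce i • v i := by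
          refine (Finset.sum_subset (Finset.subset_univ s) ?_).symm
          intro i _ hi
          simp [hce, hi]
        have h2 : ∑ i ∈ s, ce i • v i = ∑ i : s, c i • v i := by
          rw [← Finset.sum_coe_sort]
          refine Finset.sum_congr rfl fun i _ => ?_
          simp [hce, i.2]
        rw [h1, h2, hcsum]
      set t' : ι → ℝ := fun i => t i - α * ce i with ht'
      have ht'0 : ∀ i, 0 ≤ t' i := by
        intro i
        by_cases hi : i ∈ s
        · rcases le_or_gt (c ⟨i, hi⟩) 0 with hc | hc
          · have : α * ce i ≤ 0 := mul_nonpos_of_nonneg_of_nonpos hα0 (by simp [hce, hi, hc])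
            simp only [ht']; linarith [ht0 i]
          · have hmem : (⟨i, hi⟩ : s) ∈ pos := by simp [hpos, hc]
            have := hi₀min _ hmem
            have : α * c ⟨i, hi⟩ ≤ t i := by
              rw [hα]
              calc t i₀ / c i₀ * c ⟨i, hi⟩ ≤ t i / c ⟨i, hi⟩ * c ⟨i, hi⟩ := by
                    exact mul_le_mul_of_nonneg_right this hc.le
                _ = t i := by field_simp
            simp only [ht', hce, dif_pos hi]; linarith
        · have : t i = 0 := by
            by_contra h
            exact hi (by simp [hs, h])
          simp [ht', hce, hi, this]
      have ht'sum : ∑ i, t' i • v i = ∑ i, t i • v i := by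
        simp only [ht', sub_smul, Finset.sum_sub_distrib, mul_smul]
        rw [← Finset.smul_sum, hce_sum]
        simp
      have ht'i₀ : t' (i₀ : ι) = 0 := by
        simp only [ht', hce, dif_pos (i₀ : s).2]
        have : c i₀ ≠ 0 := hci₀.ne'
        have h2 : ce (i₀:ι) = c i₀ := by simp [hce, (i₀:s).2]
        rw [hα]
        field_simp
        ring
      have hsub : (Finset.univ.filter fun i => t' i ≠ 0) ⊆ s.erase (i₀ : ι) := by
        intro i hi
        simp only [Finset.mem_filter] at hi
        rcases hi with ⟨-, hne⟩
        by_cases his : i ∈ s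
        · refine Finset.mem_erase.mpr ⟨?_, his⟩
          rintro rfl
          exact hne ht'i₀
        · exfalso
          apply hne
          have : t i = 0 := by
            by_contra h
            exact his (by simp [hs, h])
          simp [ht', hce, his, this]
      have hcard' : (Finset.univ.filter fun i => t' i ≠ 0).card ≤ N := by
        have h1 := Finset.card_le_card hsub
        have h2 : ((i₀ : ι)) ∈ s := (i₀ : s).2
        have h3 := Finset.card_erase_of_mem h2
        omega
      obtain ⟨s', hli', u, hu0, hu, husum⟩ := ih t' ht'0 hcard'
      exact ⟨s', hli', u, hu0, hu, by rw [husum, ht'sum]⟩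


lemma isClosed_coneSet {ι : Type*} [Fintype ι] (v : ι → E) : IsClosed (coneSet v) := by
  classical
  have key : coneSet v =
      ⋃ s ∈ {s : Finset ι | LinearIndependent ℝ (fun i : s => v i)},
        (fun x => x) '' coneSet (fun i : s => v (i : ι)) := by
    ext x
    simp only [Set.mem_iUnion, Set.mem_setOf_eq, Set.image_id']
    constructor
    · rintro ⟨t, ht0, rfl⟩
      obtain ⟨s, hli, u, hu0, husupp, husum⟩ :=
        exists_li_rep v (Finset.univ.filter fun i => t i ≠ 0).card t ht0 le_rfl
      refine ⟨s, hli, fun i => u i, fun i => hu0 i, ?_⟩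
      rw [← husum]
      exact sum_extend s v u husupp
    · rintro ⟨s, hli, u, hu0, rfl⟩
      refine ⟨fun i => if h : i ∈ s then u ⟨i, h⟩ else 0, fun i => ?_, ?_⟩
      · by_cases h : i ∈ s <;> simp [h, hu0]
      · rw [sum_extend s v (fun i => if h : i ∈ s then u ⟨i, h⟩ else 0)
          (fun i hi => by simp [hi])]
        refine (Finset.sum_congr rfl fun i _ => ?_).symm
        simp [i.2]
  rw [key]
  refine Set.Finite.isClosed_biUnion (Set.toFinite _) fun s hs => ?_
  simpa using isClosed_coneSet_of_li hs




variable {E : Type*} [NormedAddCommGroup E] [NormedSpace ℝ E] [FiniteDimensional ℝ E]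

lemma max_sub_max_neg (a : ℝ) : max a 0 - max (-a) 0 = a := by
  rcases le_total a 0 with h | h
  · rw [max_eq_right h, max_eq_left (by linarith)]; ring
  · rw [max_eq_left h, max_eq_right (by linarith)]; ring

lemma single_eq_ite {ι : Type*} [Fintype ι] [DecidableEq ι] (i : ι) :
    (Pi.single i 1 : ι → ℝ) = fun j => if i = j then 1 else 0 := by
  funext j
  simp [Pi.single_apply, eq_comm]

/-- Farkas-type alternative. -/
lemma farkas {ι F : Type*} [Fintype ι] [AddCommGroup F] [Module ℝ F] [FiniteDimensional ℝ F]
    (a : ι → F →ₗ[ℝ] ℝ) (d : ι → ℝ) :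
    (∃ z : F, ∀ i, a i z ≤ d i) ∨
    (∃ l : ι → ℝ, (∀ i, 0 ≤ l i) ∧ (∀ z, ∑ i, l i * a i z = 0) ∧ ∑ i, l i * d i < 0) := by
  classical
  by_cases hfeas : ∃ z : F, ∀ i, a i z ≤ d i
  · exact Or.inl hfeas
  right
  set D := Module.finrank ℝ F with hD
  set bas := Module.finBasis ℝ F with hbas
  set Φ : F →ₗ[ℝ] (ι → ℝ) := LinearMap.pi a with hΦdef
  have hΦapp : ∀ (z : F) (i : ι), Φ z i = a i z := fun z i => rfl
  set v : ((Fin D ⊕ Fin D) ⊕ ι) → (ι → ℝ) :=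
    Sum.elim (Sum.elim (fun j => Φ (bas j)) (fun j => -Φ (bas j)))
      (fun i => Pi.single i 1) with hv
  have hΦmem : ∀ z : F, Φ z ∈ coneSet v := by
    intro z
    set r : Fin D → ℝ := fun j => bas.repr z j with hr
    refine ⟨Sum.elim (Sum.elim (fun j => max (r j) 0) (fun j => max (-r j) 0)) 0, ?_, ?_⟩
    · rintro ((j | j) | i) <;> simp [le_max_right]
    · rw [Fintype.sum_sum_type, Fintype.sum_sum_type]
      simp only [Sum.elim_inl, Sum.elim_inr, hv, Pi.zero_apply, zero_smul,
        Finset.sum_const_zero, add_zero]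
      rw [← Finset.sum_add_distrib]
      have : ∀ j, max (r j) 0 • Φ (bas j) + max (-r j) 0 • (-Φ (bas j))
          = r j • Φ (bas j) := by
        intro j
        rw [smul_neg, ← sub_eq_add_neg, ← sub_smul, max_sub_max_neg]
      rw [Finset.sum_congr rfl fun j _ => this j]
      have : ∑ j, r j • Φ (bas j) = Φ (∑ j, r j • bas j) := by
        rw [map_sum]; simp only [map_smul]
      rw [this, hr]
      congr 1
      exact (bas.sum_repr z).symm
  -- d is not in the cone
  have hdK : d ∉ coneSet v := by
    rintro ⟨t, ht, hd⟩
    apply hfeas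
    refine ⟨∑ j, (t (.inl (.inl j)) - t (.inl (.inr j))) • bas j, fun i => ?_⟩
    have hdi : d i = ∑ p, t p • v p i := by
      rw [hd]; simp [Finset.sum_apply]
    rw [hdi, Fintype.sum_sum_type, Fintype.sum_sum_type]
    simp only [Sum.elim_inl, Sum.elim_inr, hv, smul_eq_mul]
    have h3 : ∑ i', t (.inr i') * (Pi.single i' 1 : ι → ℝ) i = t (.inr i) := by
      rw [Finset.sum_congr rfl (fun i' _ => by rw [single_eq_ite])]
      simp [mul_ite, Finset.sum_ite_eq]
    rw [h3]
    have h12 : ∑ j, t (.inl (.inl j)) * Φ (bas j) i + ∑ j, t (.inl (.inr j)) * (-Φ (bas j)) i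
        = a i (∑ j, (t (.inl (.inl j)) - t (.inl (.inr j))) • bas j) := by
      rw [map_sum, ← Finset.sum_add_distrib]
      refine Finset.sum_congr rfl fun j _ => ?_
      rw [map_smul, smul_eq_mul, ← hΦapp]
      simp only [Pi.neg_apply]
      ring
    rw [h12]
    have := ht (.inr i)
    linarith
  obtain ⟨f, u, hfK, hfd⟩ :=
    geometric_hahn_banach_closed_point (coneSet_convex v) (isClosed_coneSet v) hdK
  have hu0 : 0 < u := by simpa using hfK 0 (coneSet_zero v)
  have hfle : ∀ w ∈ coneSet v, f w ≤ 0 := by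
    intro w hw
    by_contra hpos
    push_neg at hpos
    have hne : f w ≠ 0 := ne_of_gt hpos
    have hmem := coneSet_smul (c := (u + 1) / f w)
      (div_nonneg (by linarith) hpos.le) hw
    have := hfK _ hmem
    rw [map_smul, smul_eq_mul, div_mul_cancel₀ _ hne] at this
    linarith
  set l : ι → ℝ := fun i => -f (Pi.single i 1) with hl
  have hl0 : ∀ i, 0 ≤ l i := by
    intro i
    have : (Pi.single i 1 : ι → ℝ) ∈ coneSet v := mem_coneSet_self v (.inr i)
    have := hfle _ this
    simp only [hl]; linarith
  have hrep : ∀ w : ι → ℝ, f w = ∑ i, w i * f (Pi.single i 1) := by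
    intro w
    conv_lhs => rw [pi_eq_sum_univ w]
    rw [map_sum]
    exact Finset.sum_congr rfl fun i _ => by rw [map_smul, smul_eq_mul, single_eq_ite]
  have hΦ0 : ∀ z, f (Φ z) = 0 := by
    intro z
    have h1 := hfle _ (hΦmem z)
    have h2 := hfle _ (hΦmem (-z))
    rw [map_neg, map_neg] at h2
    linarith
  refine ⟨l, hl0, fun z => ?_, ?_⟩
  · have := hΦ0 z
    rw [hrep (Φ z)] at this
    have heq : ∑ i, l i * a i z = -∑ i, (Φ z) i * f (Pi.single i 1) := by
      rw [← Finset.sum_neg_distrib]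
      refine Finset.sum_congr rfl fun i _ => ?_
      rw [hΦapp, hl]; ring
    rw [heq, this, neg_zero]
  · have heq : ∑ i, l i * d i = -∑ i, d i * f (Pi.single i 1) := by
      rw [← Finset.sum_neg_distrib]
      refine Finset.sum_congr rfl fun i _ => by rw [hl]; ring
    rw [heq, ← hrep d]
    linarith


end Stmt15Aux

namespace Stmt15Aux


variable {m n : ℕ} (A : Matrix (Fin m) (Fin n) ℝ) (Bset : Finset (Fin m))

lemma dotp_sum_right {n : ℕ} (c x : Fin n → ℝ) (t : ℝ) (d : Fin n → ℝ) :
    dotp c (x + t • d) = dotp c x + t * dotp c d := by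
  simp only [dotp, Pi.add_apply, Pi.smul_apply, smul_eq_mul, mul_add, Finset.sum_add_distrib,
    Finset.mul_sum]
  congr 1
  exact Finset.sum_congr rfl fun j _ => by ring

lemma mulVec_eq_sum (x : Fin n → ℝ) (ρ : Fin m) :
    A.mulVec x ρ = ∑ j, A ρ j * x j := by
  simp [Matrix.mulVec, dotProduct]

lemma surj_of_rank (hcard : Bset.card = A.rank)
    (hrank : (A.submatrix (fun ρ : Bset => (ρ : Fin m)) id).rank = A.rank) :
    ∀ w : Bset → ℝ, ∃ x : Fin n → ℝ, ∀ ρ : Bset, A.mulVec x (ρ : Fin m) = w ρ := by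
  intro w
  set M := A.submatrix (fun ρ : Bset => (ρ : Fin m)) id with hM
  have htop : LinearMap.range M.mulVecLin = ⊤ := by
    apply Submodule.eq_top_of_finrank_eq
    have h1 : Module.finrank ℝ (LinearMap.range M.mulVecLin) = M.rank := rfl
    rw [h1, hrank, ← hcard, Module.finrank_pi, Fintype.card_coe]
  obtain ⟨x, hx⟩ := LinearMap.range_eq_top.mp htop w
  refine ⟨x, fun ρ => ?_⟩
  have : M.mulVec x ρ = w ρ := by rw [← Matrix.mulVecLin_apply, hx]
  rw [← this]
  simp [hM, Matrix.mulVec, dotProduct, Matrix.submatrix_apply]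

lemma sSup_eq_top_of_dir {β : Fin m → ℝ} {c : Fin n → ℝ}
    (hne : ∃ x, ∀ ρ ∈ Bset, A.mulVec x ρ ≤ β ρ) (dvec : Fin n → ℝ)
    (hdir : ∀ ρ ∈ Bset, A.mulVec dvec ρ ≤ 0) (hpos : 0 < dotp c dvec) :
    sSup ((fun x => ((dotp c x : ℝ) : EReal)) ''
      {x : Fin n → ℝ | ∀ ρ ∈ Bset, A.mulVec x ρ ≤ β ρ}) = ⊤ := by
  obtain ⟨x₀, hx₀⟩ := hne
  rw [sSup_eq_top]
  intro w hw
  induction w using EReal.rec with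
  | bot =>
    exact ⟨_, Set.mem_image_of_mem _ hx₀, EReal.bot_lt_coe _⟩
  | coe r =>
    set t : ℝ := max 0 ((r + 1 - dotp c x₀) / dotp c dvec) with ht
    have ht0 : 0 ≤ t := le_max_left _ _
    refine ⟨_, Set.mem_image_of_mem _ (show x₀ + t • dvec ∈ _ from fun ρ hρ => ?_), ?_⟩
    · have : A.mulVec (x₀ + t • dvec) ρ = A.mulVec x₀ ρ + t * A.mulVec dvec ρ := by
        rw [← Matrix.mulVecLin_apply, map_add, map_smul]
        simp [Matrix.mulVecLin_apply]
      rw [this]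
      have := mul_nonpos_of_nonneg_of_nonpos ht0 (hdir ρ hρ)
      have := hx₀ ρ hρ
      linarith
    · rw [EReal.coe_lt_coe_iff, dotp_sum_right]
      have h2 : (r + 1 - dotp c x₀) / dotp c dvec ≤ t := le_max_right _ _
      rw [div_le_iff₀ hpos] at h2
      linarith
  | top => exact absurd hw (lt_irrefl _)

lemma dotp_rep (c : Fin n → ℝ) (μ : Bset → ℝ)
    (hrep : ∀ j, c j = ∑ ρ : Bset, μ ρ * A (ρ : Fin m) j) (x : Fin n → ℝ) :
    dotp c x = ∑ ρ : Bset, μ ρ * A.mulVec x (ρ : Fin m) := by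
  simp only [mulVec_eq_sum]
  calc dotp c x = ∑ j, (∑ ρ : Bset, μ ρ * A (ρ : Fin m) j) * x j := by
        exact Finset.sum_congr rfl fun j _ => by rw [← hrep j]
    _ = ∑ j, ∑ ρ : Bset, μ ρ * A (ρ : Fin m) j * x j := by
        exact Finset.sum_congr rfl fun j _ => by rw [Finset.sum_mul]
    _ = ∑ ρ : Bset, ∑ j, μ ρ * A (ρ : Fin m) j * x j := Finset.sum_comm
    _ = ∑ ρ : Bset, μ ρ * ∑ j, A (ρ : Fin m) j * x j := by
        refine Finset.sum_congr rfl fun ρ _ => ?_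
        rw [Finset.mul_sum]
        exact Finset.sum_congr rfl fun j _ => by ring

lemma exists_nonneg_rep (hcard : Bset.card = A.rank)
    (hrank : (A.submatrix (fun ρ : Bset => (ρ : Fin m)) id).rank = A.rank)
    (c : Fin n → ℝ) (β : Fin m → ℝ)
    (hne : ∃ x, ∀ ρ ∈ Bset, A.mulVec x ρ ≤ β ρ)
    (hfin : sSup ((fun x => ((dotp c x : ℝ) : EReal)) ''
      {x : Fin n → ℝ | ∀ ρ ∈ Bset, A.mulVec x ρ ≤ β ρ}) ≠ ⊤) :
    ∃ μ : Bset → ℝ, (∀ ρ, 0 ≤ μ ρ) ∧ ∀ j, c j = ∑ ρ : Bset, μ ρ * A (ρ : Fin m) j := by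
  classical
  set W := Submodule.span ℝ (Set.range fun ρ : Bset => (A (ρ : Fin m) : Fin n → ℝ)) with hW
  have hrepφ : ∀ (φ : Module.Dual ℝ (Fin n → ℝ)) (w : Fin n → ℝ),
      φ w = ∑ j, w j * φ (Pi.single j 1) := by
    intro φ w
    conv_lhs => rw [pi_eq_sum_univ w]
    rw [map_sum]
    refine Finset.sum_congr rfl fun j _ => ?_
    rw [map_smul, smul_eq_mul]
    have : (fun j' => if j = j' then (1:ℝ) else 0) = Pi.single j 1 := by
      funext j'
      simp [Pi.single_apply, eq_comm]
    rw [this]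
  have hcW : c ∈ W := by
    by_contra hcW
    obtain ⟨φ, hφc, hφW⟩ := Submodule.exists_dual_map_eq_bot_of_notMem hcW inferInstance
    set dvec : Fin n → ℝ := fun j => (φ c) * φ (Pi.single j 1) with hdvec
    have hφrow : ∀ ρ : Bset, φ (A (ρ : Fin m)) = 0 := by
      intro ρ
      have hmem : (A (ρ : Fin m) : Fin n → ℝ) ∈ W :=
        Submodule.subset_span ⟨ρ, rfl⟩
      have : φ (A (ρ : Fin m)) ∈ W.map φ := Submodule.mem_map_of_mem hmem
      rw [hφW] at this
      simpa using this
    have hdir : ∀ ρ ∈ Bset, A.mulVec dvec ρ ≤ 0 := by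
      intro ρ hρ
      have : A.mulVec dvec ρ = (φ c) * φ (A ρ) := by
        rw [mulVec_eq_sum, hrepφ φ (A ρ), Finset.mul_sum]
        refine Finset.sum_congr rfl fun j _ => by simp only [hdvec]; ring
      rw [this, hφrow ⟨ρ, hρ⟩]
      simp
    have hpos : 0 < dotp c dvec := by
      have h2 : dotp c dvec = (φ c) * ∑ j, c j * φ (Pi.single j 1) := by
        rw [dotp, Finset.mul_sum]
        exact Finset.sum_congr rfl fun j _ => by simp only [hdvec]; ring
      rw [h2, ← hrepφ φ c]
      exact mul_self_pos.mpr hφc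
    exact hfin (sSup_eq_top_of_dir A Bset hne dvec hdir hpos)
  obtain ⟨μ, hμ⟩ := Submodule.mem_span_range_iff_exists_fun ℝ |>.mp hcW
  have hμrep : ∀ j, c j = ∑ ρ : Bset, μ ρ * A (ρ : Fin m) j := by
    intro j
    rw [← hμ]
    simp [Finset.sum_apply]
  refine ⟨μ, ?_, hμrep⟩
  by_contra hneg
  push_neg at hneg
  obtain ⟨ρ₀, hρ₀⟩ := hneg
  obtain ⟨dvec, hdvec⟩ := surj_of_rank A Bset hcard hrank
    (fun ρ => if ρ = ρ₀ then (-1 : ℝ) else 0)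
  have hdir : ∀ ρ ∈ Bset, A.mulVec dvec ρ ≤ 0 := by
    intro ρ hρ
    rw [show ρ = ((⟨ρ, hρ⟩ : Bset) : Fin m) from rfl, hdvec ⟨ρ, hρ⟩]
    split <;> norm_num
  have hdot := dotp_rep A Bset c μ hμrep dvec
  have hval : ∀ ρ : Bset, μ ρ * A.mulVec dvec (ρ : Fin m) = if ρ = ρ₀ then -μ ρ else 0 := by
    intro ρ
    rw [hdvec ρ]
    split <;> ring
  have hpos : 0 < dotp c dvec := by
    rw [hdot, Finset.sum_congr rfl fun ρ _ => hval ρ, Finset.sum_ite_eq']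
    simp only [Finset.mem_univ, if_true]
    linarith
  exact absurd (sSup_eq_top_of_dir A Bset hne dvec hdir hpos) hfin

lemma sSup_formula (hcard : Bset.card = A.rank)
    (hrank : (A.submatrix (fun ρ : Bset => (ρ : Fin m)) id).rank = A.rank)
    (c : Fin n → ℝ) (μ : Bset → ℝ) (hμ0 : ∀ ρ, 0 ≤ μ ρ)
    (hrep : ∀ j, c j = ∑ ρ : Bset, μ ρ * A (ρ : Fin m) j) (β : Fin m → ℝ) :
    sSup ((fun x => ((dotp c x : ℝ) : EReal)) ''
      {x : Fin n → ℝ | ∀ ρ ∈ Bset, A.mulVec x ρ ≤ β ρ}) =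
      ((∑ ρ : Bset, μ ρ * β (ρ : Fin m) : ℝ) : EReal) := by
  apply le_antisymm
  · apply sSup_le
    rintro w ⟨x, hx, rfl⟩
    rw [EReal.coe_le_coe_iff, dotp_rep A Bset c μ hrep x]
    refine Finset.sum_le_sum fun ρ _ => ?_
    exact mul_le_mul_of_nonneg_left (hx (ρ : Fin m) ρ.2) (hμ0 ρ)
  · obtain ⟨x, hxeq⟩ := surj_of_rank A Bset hcard hrank (fun ρ => β (ρ : Fin m))
    have hmem : x ∈ {x : Fin n → ℝ | ∀ ρ ∈ Bset, A.mulVec x ρ ≤ β ρ} := by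
      intro ρ hρ
      rw [show ρ = ((⟨ρ, hρ⟩ : Bset) : Fin m) from rfl, hxeq ⟨ρ, hρ⟩]
    have hval : dotp c x = ∑ ρ : Bset, μ ρ * β (ρ : Fin m) := by
      rw [dotp_rep A Bset c μ hrep x]
      exact Finset.sum_congr rfl fun ρ _ => by rw [hxeq ρ]
    rw [← hval]
    exact le_sSup (Set.mem_image_of_mem _ hmem)


end Stmt15Aux

/-- Generalization of the Balas–Blair–Jeroslow theorem (Corollary 2): formulation (10) is
ideal for unions of polyhedra with a common basis structure. -/
theorem stmt15 {m n k : ℕ} (A : Matrix (Fin m) (Fin n) ℝ) (b : Fin k → Fin m → ℝ)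
    (P : Fin k → Set (Fin n → ℝ))
    (hP : ∀ i, P i = {x | ∀ ρ, A.mulVec x ρ ≤ b i ρ})
    (hPne : ∀ i, (P i).Nonempty)
    (hB : ∀ c : Fin n → ℝ, ∃ B : Finset (Fin m), B.card = A.rank ∧
        (A.submatrix (fun ρ : B => (ρ : Fin m)) id).rank = A.rank ∧
        ∀ i, sSup ((fun x => ((dotp c x : ℝ) : EReal)) ''
                {x : Fin n → ℝ | ∀ ρ ∈ B, A.mulVec x ρ ≤ b i ρ}) =
             sSup ((fun x => ((dotp c x : ℝ) : EReal)) '' P i)) :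
    convexHull ℝ (⋃ i, (P i) ×ˢ ({Pi.single i 1} : Set (Fin k → ℝ))) =
      {p : (Fin n → ℝ) × (Fin k → ℝ) | (∀ i, 0 ≤ p.2 i) ∧ (∑ i, p.2 i = 1) ∧
        ∀ ρ, A.mulVec p.1 ρ ≤ ∑ i, p.2 i * b i ρ} := by
  classical
  apply Set.Subset.antisymm
  · -- easy direction
    apply convexHull_min
    · rintro ⟨x, y⟩ hxy
      simp only [Set.mem_iUnion] at hxy
      obtain ⟨i, hmem⟩ := hxy
      rw [Set.mem_prod] at hmem
      obtain ⟨hx, hy⟩ := hmem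
      rw [Set.mem_singleton_iff] at hy
      replace hy : y = Pi.single i 1 := hy
      replace hx : x ∈ P i := hx
      have hxP : ∀ ρ, A.mulVec x ρ ≤ b i ρ := by rw [hP i] at hx; exact hx
      have hyval : ∀ i', y i' = if i' = i then (1:ℝ) else 0 := fun i' => by
        rw [hy, Pi.single_apply]
      refine ⟨fun i' => ?_, ?_, fun ρ => ?_⟩
      · show 0 ≤ y i'
        rw [hyval]; split <;> norm_num
      · show ∑ i', y i' = 1
        rw [Finset.sum_congr rfl fun i' _ => hyval i']; simp
      · show A.mulVec x ρ ≤ ∑ i', y i' * b i' ρ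
        have heq : ∑ i', y i' * b i' ρ = b i ρ := by
          rw [Finset.sum_congr rfl fun i' _ => by rw [hyval i', ite_mul, one_mul, zero_mul]]
          simp
        rw [heq]
        exact hxP ρ
    · rintro ⟨x1, y1⟩ ⟨h1a, h1b, h1c⟩ ⟨x2, y2⟩ ⟨h2a, h2b, h2c⟩ s t hs ht hst
      refine ⟨fun i => ?_, ?_, fun ρ => ?_⟩
      · exact add_nonneg (mul_nonneg hs (h1a i)) (mul_nonneg ht (h2a i))
      · simp only [Prod.smul_mk, Prod.mk_add_mk, smul_eq_mul, Pi.add_apply, Pi.smul_apply]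
        rw [Finset.sum_add_distrib, ← Finset.mul_sum, ← Finset.mul_sum, h1b, h2b]
        simpa using hst
      · simp only [Prod.smul_mk, Prod.mk_add_mk, Pi.add_apply, Pi.smul_apply, smul_eq_mul]
        have hmv : A.mulVec (s • x1 + t • x2) ρ = s * A.mulVec x1 ρ + t * A.mulVec x2 ρ := by
          rw [← Matrix.mulVecLin_apply, map_add, map_smul, map_smul]
          simp [Matrix.mulVecLin_apply]
        rw [hmv]
        have h1 := h1c ρ; have h2 := h2c ρ
        have : ∑ i, (s * y1 i + t * y2 i) * b i ρ
            = s * ∑ i, y1 i * b i ρ + t * ∑ i, y2 i * b i ρ := by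
          rw [Finset.mul_sum, Finset.mul_sum, ← Finset.sum_add_distrib]
          exact Finset.sum_congr rfl fun i _ => by ring
        rw [this]
        have := mul_le_mul_of_nonneg_left h1 hs
        have := mul_le_mul_of_nonneg_left h2 ht
        linarith
  · -- hard direction
    rintro ⟨xb, yb⟩ ⟨hy0, hy1, hax⟩
    replace hy0 : ∀ i, 0 ≤ yb i := hy0
    replace hy1 : ∑ i, yb i = 1 := hy1
    replace hax : ∀ ρ, A.mulVec xb ρ ≤ ∑ i, yb i * b i ρ := hax
    -- the equality functionals
    set eqf : Fin n → (Fin k → Fin n → ℝ) →ₗ[ℝ] ℝ := fun j =>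
      ∑ i' : Fin k, yb i' • ((LinearMap.proj j).comp
        (LinearMap.proj (R := ℝ) (φ := fun _ : Fin k => Fin n → ℝ) i')) with heqf
    have heqf_app : ∀ j (z : Fin k → Fin n → ℝ), eqf j z = ∑ i', yb i' * z i' j := by
      intro j z
      rw [heqf, LinearMap.sum_apply]
      exact Finset.sum_congr rfl fun i' _ => by
        simp [LinearMap.smul_apply, LinearMap.comp_apply, LinearMap.proj_apply]
    set af : ((Fin k × Fin m) ⊕ (Fin n ⊕ Fin n)) → (Fin k → Fin n → ℝ) →ₗ[ℝ] ℝ :=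
      Sum.elim
        (fun p => (LinearMap.proj p.2).comp ((Matrix.mulVecLin A).comp
          (LinearMap.proj (R := ℝ) (φ := fun _ : Fin k => Fin n → ℝ) p.1)))
        (Sum.elim (fun j => eqf j) (fun j => -eqf j)) with haf
    set df : ((Fin k × Fin m) ⊕ (Fin n ⊕ Fin n)) → ℝ :=
      Sum.elim (fun p => b p.1 p.2) (Sum.elim (fun j => xb j) (fun j => -xb j)) with hdf
    have haf_app : ∀ i ρ (z : Fin k → Fin n → ℝ),
        af (.inl (i, ρ)) z = A.mulVec (z i) ρ := by
      intro i ρ z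
      rw [haf]
      simp [LinearMap.comp_apply, LinearMap.proj_apply, Matrix.mulVecLin_apply]
    rcases Stmt15Aux.farkas af df with ⟨z, hz⟩ | ⟨l, hl0, hlin, hlt⟩
    · -- feasible: build the convex combination
      have hzP : ∀ i, z i ∈ P i := by
        intro i
        rw [hP i]
        intro ρ
        have h := hz (.inl (i, ρ))
        rw [haf_app] at h
        exact h
      have hzsum : ∀ j, ∑ i', yb i' * z i' j = xb j := by
        intro j
        have h1 := hz (.inr (.inl j))
        have h2 := hz (.inr (.inr j))
        rw [haf, hdf] at h1 h2
        simp only [Sum.elim_inr, Sum.elim_inl, LinearMap.neg_apply, neg_le_neg_iff] at h1 h2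
        rw [heqf_app] at h1 h2
        exact le_antisymm h1 h2
      have hcm := Finset.centerMass_mem_convexHull (Finset.univ (α := Fin k))
        (w := yb) (z := fun i => (z i, (Pi.single i 1 : Fin k → ℝ))) (fun i _ => hy0 i)
        (by rw [hy1]; norm_num)
        (fun i _ => Set.mem_iUnion.mpr ⟨i, Set.mk_mem_prod (hzP i) (Set.mem_singleton _)⟩)
      have hcmeq : Finset.univ.centerMass yb
          (fun i => (z i, (Pi.single i 1 : Fin k → ℝ))) = (xb, yb) := by
        rw [Finset.centerMass, hy1, inv_one, one_smul, Prod.ext_iff]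
        constructor
        · rw [Prod.fst_sum]
          show (∑ i, (yb i • (z i, (Pi.single i 1 : Fin k → ℝ))).1) = xb
          have hfst : ∀ i : Fin k, (yb i • (z i, (Pi.single i 1 : Fin k → ℝ))).1
              = yb i • z i := fun i => rfl
          rw [Finset.sum_congr rfl fun i _ => hfst i]
          funext j
          rw [Finset.sum_apply]
          simp only [Pi.smul_apply, smul_eq_mul]
          exact hzsum j
        · rw [Prod.snd_sum]
          show (∑ i, (yb i • (z i, (Pi.single i 1 : Fin k → ℝ))).2) = yb
          have hsnd : ∀ i : Fin k, (yb i • (z i, (Pi.single i 1 : Fin k → ℝ))).2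
              = yb i • (Pi.single i 1 : Fin k → ℝ) := fun i => rfl
          rw [Finset.sum_congr rfl fun i _ => hsnd i]
          funext i'
          rw [Finset.sum_apply]
          simp [Pi.single_apply, mul_ite, Finset.sum_ite_eq]
      rwa [hcmeq] at hcm
    · -- infeasible: derive a contradiction
      exfalso
      set lam : Fin k → Fin m → ℝ := fun i ρ => l (.inl (i, ρ)) with hlam
      set c : Fin n → ℝ := fun j => l (.inr (.inr j)) - l (.inr (.inl j)) with hc
      have hkey : ∀ (i : Fin k) (x : Fin n → ℝ),
          ∑ ρ, lam i ρ * A.mulVec x ρ = yb i * dotp c x := by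
        intro i x
        have h0 := hlin (Pi.single i x)
        rw [Fintype.sum_sum_type, Fintype.sum_sum_type, Fintype.sum_prod_type] at h0
        have e1 : ∑ i', ∑ ρ, l (.inl (i', ρ)) * af (.inl (i', ρ)) (Pi.single i x)
            = ∑ ρ, lam i ρ * A.mulVec x ρ := by
          rw [Finset.sum_eq_single_of_mem i (Finset.mem_univ i) (fun i' _ hne =>
            Finset.sum_eq_zero fun ρ _ => by
              rw [haf_app, Pi.single_eq_of_ne hne]; simp)]
          refine Finset.sum_congr rfl fun ρ _ => ?_
          rw [haf_app, Pi.single_eq_same]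
        have e2 : ∀ j, eqf j (Pi.single i x) = yb i * x j := by
          intro j
          rw [heqf_app]
          rw [Finset.sum_eq_single_of_mem i (Finset.mem_univ i) (fun i' _ hne => by
            rw [Pi.single_eq_of_ne hne]; simp)]
          rw [Pi.single_eq_same]
        have e3 : ∑ j, l (.inr (.inl j)) * af (.inr (.inl j)) (Pi.single i x)
              + ∑ j, l (.inr (.inr j)) * af (.inr (.inr j)) (Pi.single i x)
            = - (yb i * dotp c x) := by
          have ha1 : ∀ j, af (.inr (.inl j)) (Pi.single i x) = yb i * x j := fun j => by
            rw [haf]; simp only [Sum.elim_inr, Sum.elim_inl]; exact e2 j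
          have ha2 : ∀ j, af (.inr (.inr j)) (Pi.single i x) = -(yb i * x j) := fun j => by
            rw [haf]; simp only [Sum.elim_inr, LinearMap.neg_apply]
            rw [e2 j]
          simp only [ha1, ha2]
          rw [dotp, Finset.mul_sum, ← Finset.sum_add_distrib, ← Finset.sum_neg_distrib]
          refine Finset.sum_congr rfl fun j _ => ?_
          simp only [hc]
          ring
        rw [e1, e3] at h0
        linarith
      have hlt' : ∑ i, ∑ ρ, lam i ρ * b i ρ < dotp c xb := by
        rw [Fintype.sum_sum_type, Fintype.sum_sum_type, Fintype.sum_prod_type] at hlt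
        have e4 : ∑ j, l (.inr (.inl j)) * df (.inr (.inl j))
              + ∑ j, l (.inr (.inr j)) * df (.inr (.inr j)) = - dotp c xb := by
          rw [hdf]
          simp only [Sum.elim_inr, Sum.elim_inl]
          rw [dotp, ← Finset.sum_add_distrib, ← Finset.sum_neg_distrib]
          refine Finset.sum_congr rfl fun j _ => ?_
          simp only [hc]
          ring
        have e5 : ∑ i, ∑ ρ, l (.inl (i, ρ)) * df (.inl (i, ρ))
            = ∑ i, ∑ ρ, lam i ρ * b i ρ := by
          refine Finset.sum_congr rfl fun i _ => Finset.sum_congr rfl fun ρ _ => ?_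
          simp only [hlam, hdf, Sum.elim_inl]
        rw [e4, e5] at hlt
        linarith
      have hupper : ∀ (i : Fin k) (x : Fin n → ℝ), x ∈ P i →
          yb i * dotp c x ≤ ∑ ρ, lam i ρ * b i ρ := by
        intro i x hx
        rw [← hkey i x]
        refine Finset.sum_le_sum fun ρ _ => ?_
        have hxρ : A.mulVec x ρ ≤ b i ρ := by rw [hP i] at hx; exact hx ρ
        exact mul_le_mul_of_nonneg_left hxρ (hl0 (.inl (i, ρ)))
      obtain ⟨i₀, hi₀⟩ : ∃ i, 0 < yb i := by
        by_contra h
        push_neg at h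
        have : ∑ i, yb i ≤ 0 := Finset.sum_nonpos fun i _ => h i
        rw [hy1] at this
        linarith
      obtain ⟨Bset, hcard, hrank, hsup⟩ := hB c
      have hfinP : sSup ((fun x => ((dotp c x : ℝ) : EReal)) '' P i₀)
          ≤ (((∑ ρ, lam i₀ ρ * b i₀ ρ) / yb i₀ : ℝ) : EReal) := by
        apply sSup_le
        rintro w ⟨x, hx, rfl⟩
        rw [EReal.coe_le_coe_iff, le_div_iff₀ hi₀, mul_comm]
        exact hupper i₀ x hx
      have hfin : sSup ((fun x => ((dotp c x : ℝ) : EReal)) ''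
          {x : Fin n → ℝ | ∀ ρ ∈ Bset, A.mulVec x ρ ≤ b i₀ ρ}) ≠ ⊤ := by
        rw [hsup i₀]
        exact ((lt_of_le_of_lt hfinP (EReal.coe_lt_top _)).ne)
      have hneQ : ∃ x, ∀ ρ ∈ Bset, A.mulVec x ρ ≤ b i₀ ρ := by
        obtain ⟨x₀, hx₀⟩ := hPne i₀
        rw [hP i₀] at hx₀
        exact ⟨x₀, fun ρ _ => hx₀ ρ⟩
      obtain ⟨μ, hμ0, hμrep⟩ := Stmt15Aux.exists_nonneg_rep A Bset hcard hrank c (b i₀) hneQ hfin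
      set σ : Fin k → ℝ := fun i => ∑ ρ : Bset, μ ρ * b i (ρ : Fin m) with hσdef
      have hσ : ∀ i, sSup ((fun x => ((dotp c x : ℝ) : EReal)) '' P i) = ((σ i : ℝ) : EReal) := by
        intro i
        rw [← hsup i, Stmt15Aux.sSup_formula A Bset hcard hrank c μ hμ0 hμrep (b i)]
      have hyσ : ∀ i, yb i * σ i ≤ ∑ ρ, lam i ρ * b i ρ := by
        intro i
        rcases (hy0 i).eq_or_lt with h | h
        · rw [← h, zero_mul]
          obtain ⟨x₀, hx₀⟩ := hPne i
          have h2 := hupper i x₀ hx₀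
          rw [← h, zero_mul] at h2
          exact h2
        · have hle : σ i ≤ (∑ ρ, lam i ρ * b i ρ) / yb i := by
            rw [← EReal.coe_le_coe_iff, ← hσ i]
            apply sSup_le
            rintro w ⟨x, hx, rfl⟩
            rw [EReal.coe_le_coe_iff, le_div_iff₀ h, mul_comm]
            exact hupper i x hx
          calc yb i * σ i ≤ yb i * ((∑ ρ, lam i ρ * b i ρ) / yb i) :=
                mul_le_mul_of_nonneg_left hle (hy0 i)
            _ = ∑ ρ, lam i ρ * b i ρ := by field_simp
      have hchain1 : dotp c xb ≤ ∑ i, yb i * σ i := by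
        rw [Stmt15Aux.dotp_rep A Bset c μ hμrep xb]
        calc ∑ ρ : Bset, μ ρ * A.mulVec xb (ρ : Fin m)
            ≤ ∑ ρ : Bset, μ ρ * ∑ i, yb i * b i (ρ : Fin m) :=
              Finset.sum_le_sum fun ρ _ => mul_le_mul_of_nonneg_left (hax ρ) (hμ0 ρ)
          _ = ∑ ρ : Bset, ∑ i, μ ρ * (yb i * b i (ρ : Fin m)) :=
              Finset.sum_congr rfl fun ρ _ => Finset.mul_sum _ _ _
          _ = ∑ i, ∑ ρ : Bset, μ ρ * (yb i * b i (ρ : Fin m)) := Finset.sum_comm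
          _ = ∑ i, yb i * σ i := by
              refine Finset.sum_congr rfl fun i _ => ?_
              rw [hσdef, Finset.mul_sum]
              exact Finset.sum_congr rfl fun ρ _ => by ring
      have hchain2 : ∑ i, yb i * σ i ≤ ∑ i, ∑ ρ, lam i ρ * b i ρ :=
        Finset.sum_le_sum fun i _ => hyσ i
      linarith


end
end

section
/- Let (C^1, …, C^k) be an admissible family in ℝ^n and let Q ⊆ ℝ^n × ℝ^k be a closed convex set with Q ⊆ ℝ^n × Δ^k such that for all (x, y) ∈ ℝ^n × ℝ^k with all coordinates of y integers: (x, y) ∈ Q if and only if there exists i ∈ {1,…,k} with y = e^i and x ∈ C^i. Then: (1) Q(C^1,…,C^k) ⊆ Q; (2) rec(Q) = rec(Q(C^1,…,C^k)) = rec(C^1) × {0}; (3) for every ȳ ∈ Δ^k and x̄ ∈ Σ_{i=1}^k ȳ_i • C^i one has (x̄, ȳ) ∈ Q; and (4) the following are equivalent: (i) Q = Q(C^1,…,C^k); (ii) for every ȳ ∈ Δ^k and every x̄, (x̄, ȳ) ∈ Q implies x̄ ∈ Σ_{i=1}^k ȳ_i • C^i; (iii) for every x̄, (x̄, (1/k)·𝟏)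 ∈ Q implies x̄ ∈ (1/k) • (C^1 + … + C^k), where 𝟏 ∈ ℝ^k is the all-ones vector. -/
open Pointwise Set Filter Topology

noncomputable section

section RecBasic
variable {E : Type*} [NormedAddCommGroup E] [NormedSpace ℝ E]


lemma recCone_zero_mem (S : Set E) : (0 : E) ∈ recCone S := by
  intro x hx t ht; simpa using hx

lemma recCone_smul_mem {S : Set E} {d : E} (hd : d ∈ recCone S) {c : ℝ} (hc : 0 ≤ c) :
    c • d ∈ recCone S := by
  intro x hx t ht
  have := hd x hx (t * c) (mul_nonneg ht hc)
  simpa [mul_smul] using this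

lemma recCone_add_mem {S : Set E} (hS : Convex ℝ S) {d₁ d₂ : E} (h₁ : d₁ ∈ recCone S)
    (h₂ : d₂ ∈ recCone S) : d₁ + d₂ ∈ recCone S := by
  intro x hx t ht
  have := h₂ (x + t • d₁) (h₁ x hx t ht) t ht
  simpa [smul_add, add_assoc] using this

lemma recCone_sum_mem {ι : Type*} {S : Set E} (hS : Convex ℝ S) (s : Finset ι) (f : ι → E)
    (hf : ∀ i ∈ s, f i ∈ recCone S) : (∑ i ∈ s, f i) ∈ recCone S := by
  classical
  induction s using Finset.induction_on with
  | empty => simpa using recCone_zero_mem S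
  | @insert a s' hx ih =>
    rw [Finset.sum_insert hx]
    exact recCone_add_mem hS (hf a (Finset.mem_insert_self a s'))
      (ih fun i hi => hf i (Finset.mem_insert_of_mem hi))

/-- F1: a single ray in a closed convex set gives a recession direction. -/
lemma mem_recCone_of_ray {S : Set E} (hconv : Convex ℝ S) (hcl : IsClosed S) {p δ : E}
    (h : ∀ t : ℝ, 0 ≤ t → p + t • δ ∈ S) : δ ∈ recCone S := by
  intro x hx t ht
  set θ : ℕ → ℝ := fun m => t / (t + m + 1) with hθ
  have hden : ∀ m : ℕ, (0:ℝ) < t + m + 1 := by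
    intro m; positivity
  have hθ0 : ∀ m, 0 ≤ θ m := fun m => div_nonneg ht (hden m).le
  have hθ1 : ∀ m, θ m ≤ 1 := by
    intro m
    rw [div_le_one (hden m)]
    nlinarith [(Nat.cast_nonneg m : (0:ℝ) ≤ m)]
  have hmem : ∀ m : ℕ, (1 - θ m) • x + θ m • (p + (t + m + 1) • δ) ∈ S := by
    intro m
    exact hconv hx (h _ (hden m).le) (by linarith [hθ1 m]) (hθ0 m) (by ring)
  have hrw : ∀ m : ℕ, (1 - θ m) • x + θ m • (p + (t + m + 1) • δ)
      = (1 - θ m) • x + θ m • p + t • δ := by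
    intro m
    have : θ m • ((t + m + 1) • δ) = t • δ := by
      rw [smul_smul, hθ, div_mul_cancel₀]
      exact (hden m).ne'
    rw [smul_add, this]; abel
  have hθlim : Tendsto θ atTop (𝓝 0) := by
    apply Tendsto.div_atTop (tendsto_const_nhds)
    have : Tendsto (fun m : ℕ => (m : ℝ)) atTop atTop := tendsto_natCast_atTop_atTop
    have := tendsto_atTop_add_const_right atTop (1:ℝ) this
    have := tendsto_atTop_add_const_left atTop t this
    simpa [add_assoc] using this
  have hlim : Tendsto (fun m => (1 - θ m) • x + θ m • p + t • δ) atTop (𝓝 (x + t • δ)) := by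
    have h1 := (Tendsto.sub (tendsto_const_nhds (x := (1:ℝ))) hθlim).smul
      (tendsto_const_nhds (x := x))
    have h2 := hθlim.smul (tendsto_const_nhds (x := p))
    have := (h1.add h2).add (tendsto_const_nhds (x := t • δ))
    simpa using this
  refine hcl.mem_of_tendsto hlim ?_
  filter_upwards [] with m
  rw [← hrw m]; exact hmem m

/-- F2: limits of small multiples of elements are recession directions. -/
lemma mem_recCone_of_tendsto_smul {S : Set E} (hconv : Convex ℝ S) (hcl : IsClosed S)
    {x₀ : E} (hx₀ : x₀ ∈ S) {τ : ℕ → ℝ} (hτ0 : ∀ m, 0 ≤ τ m)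
    (hτ : Tendsto τ atTop (𝓝 0)) {v : ℕ → E} (hv : ∀ m, v m ∈ S) {d : E}
    (hlim : Tendsto (fun m => τ m • v m) atTop (𝓝 d)) : d ∈ recCone S := by
  apply mem_recCone_of_ray hconv hcl (p := x₀)
  intro t ht
  have hev : ∀ᶠ m in atTop, t * τ m ≤ 1 := by
    have : Tendsto (fun m => t * τ m) atTop (𝓝 (t * 0)) := tendsto_const_nhds.mul hτ
    rw [mul_zero] at this
    exact this.eventually_le_const (by norm_num : (0:ℝ) < 1)
  have hmem : ∀ᶠ m in atTop, (1 - t * τ m) • x₀ + (t * τ m) • v m ∈ S := by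
    filter_upwards [hev] with m hm
    exact hconv hx₀ (hv m) (by linarith) (mul_nonneg ht (hτ0 m)) (by ring)
  have hlim2 : Tendsto (fun m => (1 - t * τ m) • x₀ + (t * τ m) • v m) atTop
      (𝓝 (x₀ + t • d)) := by
    have h1 := ((tendsto_const_nhds (x := (1:ℝ))).sub
      ((tendsto_const_nhds (x := t)).mul hτ)).smul (tendsto_const_nhds (x := x₀))
    have h2 : Tendsto (fun m => (t * τ m) • v m) atTop (𝓝 (t • d)) := by
      have := hlim.const_smul t
      simpa [smul_smul] using this
    have := h1.add h2
    simpa using this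
  exact hcl.mem_of_tendsto hlim2 hmem

end RecBasic

section KeyLimit
variable {E : Type*} [NormedAddCommGroup E] [NormedSpace ℝ E]
variable [FiniteDimensional ℝ E]


/-- The key compactness lemma: limits of vanishing-coefficient combinations. -/
lemma key_limit {ι : Type*} [Fintype ι] (C : ι → Set E) (hne : ∀ i, (C i).Nonempty)
    (hcl : ∀ i, IsClosed (C i)) (hconv : ∀ i, Convex ℝ (C i)) (K : Set E)
    (hK : ∀ i, recCone (C i) = K)
    (a : ℕ → ι → ℝ) (b : ι → ℝ) (v : ℕ → ι → E)
    (ha : ∀ m i, 0 ≤ a m i) (hv : ∀ m i, v m i ∈ C i)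
    (hab : ∀ i, Tendsto (fun m => a m i) atTop (𝓝 (b i)))
    {z : E} (hz : Tendsto (fun m => ∑ i, a m i • v m i) atTop (𝓝 z))
    (i₀ : ι) (hb0 : 0 < b i₀) : z ∈ ∑ i, b i • C i := by
  classical
  have hbnn : ∀ i, 0 ≤ b i := fun i =>
    ge_of_tendsto (hab i) (Eventually.of_forall fun m => ha m i)
  -- the common lineality space
  set Lsub : Submodule ℝ E :=
    { carrier := {d | d ∈ K ∧ -d ∈ K}
      add_mem' := by
        intro x y hx hy
        simp only [Set.mem_setOf_eq, ← hK i₀] at hx hy ⊢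
        exact ⟨recCone_add_mem (hconv i₀) hx.1 hy.1, by
          rw [neg_add]; exact recCone_add_mem (hconv i₀) hx.2 hy.2⟩
      zero_mem' := by
        rw [Set.mem_setOf_eq, ← hK i₀]
        simpa using recCone_zero_mem (C i₀)
      smul_mem' := by
        intro c x hx
        simp only [Set.mem_setOf_eq, ← hK i₀] at hx ⊢
        rcases le_or_gt 0 c with hc | hc
        · exact ⟨recCone_smul_mem hx.1 hc, by
            rw [← smul_neg]; exact recCone_smul_mem hx.2 hc⟩
        · constructor
          · have := recCone_smul_mem hx.2 (neg_nonneg.2 hc.le)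
            rw [show c • x = (-c) • (-x) by module]
            exact this
          · have := recCone_smul_mem hx.1 (neg_nonneg.2 hc.le)
            rw [show -(c • x) = (-c) • x by module]
            exact this } with hLsubdef
  obtain ⟨qsub, hcompl⟩ := Submodule.exists_isCompl Lsub
  set π : E →ₗ[ℝ] E := qsub.subtype ∘ₗ (qsub.projectionOnto Lsub hcompl.symm)
    with hπdef
  have hπmem : ∀ x : E, x - π x ∈ Lsub := by
    intro x
    have h : (Lsub.projectionOnto qsub hcompl x : E) + (qsub.projectionOnto Lsub hcompl.symm x : E) = x :=
      Submodule.projection_add_projection_eq_self hcompl x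
    have : x - π x = (Lsub.projectionOnto qsub hcompl x : E) := by
      rw [hπdef]; simp only [LinearMap.comp_apply, Submodule.subtype_apply]
      linear_combination (norm := module) -h
    rw [this]; exact Submodule.coe_mem _
  have hπq : ∀ x : E, π x ∈ qsub := fun x => Submodule.coe_mem _
  have hLK : (Lsub : Set E) ⊆ K := fun d hd => hd.1
  have hLKneg : ∀ d ∈ Lsub, -d ∈ K := fun d hd => hd.2
  have hqclosed : IsClosed (qsub : Set E) := Submodule.closed_of_finiteDimensional qsub
  have hLclosed : IsClosed (Lsub : Set E) := Submodule.closed_of_finiteDimensional Lsub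
  -- projected points stay in the sets
  set v' : ℕ → ι → E := fun m i => π (v m i) with hv'def
  have hv' : ∀ m i, v' m i ∈ C i := by
    intro m i
    have hdir : π (v m i) - v m i ∈ recCone (C i) := by
      rw [hK i]
      have := hLKneg _ (hπmem (v m i))
      simpa using this
    have := hdir (v m i) (hv m i) 1 one_pos.le
    simpa using this
  set w : ℕ → ι → E := fun m i => a m i • v' m i with hwdef
  set ρ : ℕ → ℝ := fun m => ∑ i, ‖w m i‖ with hρdef
  have hρnn : ∀ m, 0 ≤ ρ m := fun m => Finset.sum_nonneg fun i _ => norm_nonneg _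
  have hwle : ∀ m i, ‖w m i‖ ≤ ρ m := fun m i =>
    Finset.single_le_sum (fun j _ => norm_nonneg (w m j)) (Finset.mem_univ i)
  set Z : ℕ → E := fun m => ∑ i, a m i • v m i with hZdef
  have hℓmem : ∀ m, Z m - ∑ i, w m i ∈ Lsub := by
    intro m
    have : Z m - ∑ i, w m i = ∑ i, a m i • (v m i - v' m i) := by
      rw [hZdef]
      simp only [smul_sub]
      rw [Finset.sum_sub_distrib]
    rw [this]
    exact Submodule.sum_mem _ fun i _ =>
      Submodule.smul_mem _ _ (hπmem (v m i))
  -- each w m i lies in qsub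
  have hwq : ∀ m i, w m i ∈ qsub := fun m i => Submodule.smul_mem _ _ (hπq _)
  -- tendsto of subsequences of a
  have hasub : ∀ (i) (ψ : ℕ → ℕ), StrictMono ψ →
      Tendsto (fun m => a (ψ m) i) atTop (𝓝 (b i)) := fun i ψ hψ =>
    (hab i).comp hψ.tendsto_atTop
  -- Step 1: boundedness of the projected combination
  have hBdd : ∃ R : ℝ, ∀ m, ρ m ≤ R := by
    by_contra hcon
    push_neg at hcon
    have hfreq : ∀ N : ℕ, ∃ᶠ m in atTop, (N : ℝ) ≤ ρ m := by
      intro N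
      rw [frequently_atTop]
      intro M
      obtain ⟨m, hm⟩ := hcon ((N : ℝ) + ∑ m' ∈ Finset.range M, |ρ m'|)
      have hsnn : (0:ℝ) ≤ ∑ m' ∈ Finset.range M, |ρ m'| :=
        Finset.sum_nonneg fun _ _ => abs_nonneg _
      refine ⟨m, ?_, ?_⟩
      · by_contra hlt
        push_neg at hlt
        have h1 : ρ m ≤ |ρ m| := le_abs_self _
        have h2 : |ρ m| ≤ ∑ m' ∈ Finset.range M, |ρ m'| :=
          Finset.single_le_sum (f := fun m' => |ρ m'|) (fun _ _ => abs_nonneg _)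
            (Finset.mem_range.2 hlt)
        have : (0:ℝ) ≤ (N : ℝ) := Nat.cast_nonneg N
        linarith
      · have : (0:ℝ) ≤ ∑ m' ∈ Finset.range M, |ρ m'| := hsnn
        linarith
    obtain ⟨φ, hφmono, hφ⟩ := Filter.extraction_forall_of_frequently hfreq
    have hρpos : ∀ m : ℕ, 0 < ρ (φ (m + 1)) := by
      intro m
      have := hφ (m + 1)
      push_cast at this
      have h0 : (0:ℝ) ≤ (m:ℝ) := Nat.cast_nonneg m
      linarith
    set D : ℕ → ι → E := fun m i => (ρ (φ (m + 1)))⁻¹ • w (φ (m + 1)) i with hDdef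
    have hDball : ∀ m, D m ∈ Metric.closedBall (0 : ι → E) 1 := by
      intro m
      rw [mem_closedBall_zero_iff]
      rw [pi_norm_le_iff_of_nonneg zero_le_one]
      intro i
      rw [hDdef]
      simp only [norm_smul, norm_inv, Real.norm_eq_abs,
        abs_of_pos (hρpos m)]
      rw [inv_mul_le_iff₀ (hρpos m)]
      simpa using hwle _ i
    haveI : ProperSpace (ι → E) := by infer_instance
    obtain ⟨dd, -, ψ, hψmono, hψlim⟩ :=
      tendsto_subseq_of_bounded Metric.isBounded_closedBall hDball
    have hcoord : ∀ i, Tendsto (fun m => D (ψ m) i) atTop (𝓝 (dd i)) := by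
      intro i
      exact (tendsto_pi_nhds.1 hψlim) i
    -- ρ (φ (ψ m + 1)) tends to infinity, so its inverse tends to 0
    have hρatTop : Tendsto (fun m => ρ (φ (ψ m + 1))) atTop atTop := by
      have hmono : ∀ m : ℕ, ((m : ℝ)) ≤ ρ (φ (ψ m + 1)) := by
        intro m
        have h1 : m ≤ ψ m + 1 := le_trans hψmono.le_apply (Nat.le_succ _)
        have h3 : ((m : ℕ) : ℝ) ≤ ((ψ m + 1 : ℕ) : ℝ) := Nat.cast_le.2 h1
        exact le_trans h3 (hφ (ψ m + 1))
      exact tendsto_atTop_mono hmono tendsto_natCast_atTop_atTop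
    have hρinv0 : Tendsto (fun m => (ρ (φ (ψ m + 1)))⁻¹) atTop (𝓝 0) :=
      tendsto_inv_atTop_zero.comp hρatTop
    -- each dd i is in K
    have hddK : ∀ i, dd i ∈ K := by
      intro i
      rw [← hK i]
      refine mem_recCone_of_tendsto_smul (hconv i) (hcl i) (hne i).some_mem
        (τ := fun m => (ρ (φ (ψ m + 1)))⁻¹ * a (φ (ψ m + 1)) i)
        (fun m => mul_nonneg (inv_nonneg.2 (hρnn _)) (ha _ i)) ?_
        (v := fun m => v' (φ (ψ m + 1)) i) (fun m => hv' _ i) ?_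
      · have := hρinv0.mul (hasub i (fun m => φ (ψ m + 1))
          (fun m₁ m₂ h => hφmono (Nat.succ_lt_succ (hψmono h))))
        · simpa using this
      · apply (hcoord i).congr
        intro m
        rw [hDdef, hwdef]
        simp only [smul_smul]
    -- each dd i is in qsub
    have hddq : ∀ i, dd i ∈ qsub := by
      intro i
      refine hqclosed.mem_of_tendsto (hcoord i) (Eventually.of_forall fun m => ?_)
      exact Submodule.smul_mem _ _ (hwq _ i)
    -- the norms sum to 1
    have hsum1 : ∑ i, ‖dd i‖ = 1 := by
      have hconst : ∀ m, ∑ i, ‖D m i‖ = 1 := by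
        intro m
        rw [hDdef]
        simp only [norm_smul, norm_inv, Real.norm_eq_abs, abs_of_pos (hρpos m)]
        rw [← Finset.mul_sum]
        exact inv_mul_cancel₀ (hρpos m).ne'
      have hlim2 : Tendsto (fun m => ∑ i, ‖D (ψ m) i‖) atTop (𝓝 (∑ i, ‖dd i‖)) :=
        tendsto_finset_sum _ fun i _ => (hcoord i).norm
      have : Tendsto (fun _ : ℕ => (1:ℝ)) atTop (𝓝 (∑ i, ‖dd i‖)) := by
        apply hlim2.congr
        intro m; rw [hconst (ψ m)]
      exact tendsto_nhds_unique this tendsto_const_nhds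
    -- the sum of dd is zero
    have hσ : ∑ i, dd i = 0 := by
      set σ := ∑ i, dd i with hσdef
      have hσq : σ ∈ qsub := Submodule.sum_mem _ fun i _ => hddq i
      have hsumlim : Tendsto (fun m => ∑ i, D (ψ m) i) atTop (𝓝 σ) :=
        tendsto_finset_sum _ fun i _ => hcoord i
      have hZlim : Tendsto (fun m => (ρ (φ (ψ m + 1)))⁻¹ • Z (φ (ψ m + 1))) atTop
          (𝓝 ((0:ℝ) • z)) :=
        Tendsto.smul hρinv0 (hz.comp ((hφmono.comp
          (fun m₁ m₂ h => Nat.succ_lt_succ (hψmono h) :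
            StrictMono (fun m => ψ m + 1))).tendsto_atTop))
      have hℓlim : Tendsto (fun m => (ρ (φ (ψ m + 1)))⁻¹ •
          (Z (φ (ψ m + 1)) - ∑ i, w (φ (ψ m + 1)) i)) atTop (𝓝 (0 - σ)) := by
        have : ∀ m, (ρ (φ (ψ m + 1)))⁻¹ • (Z (φ (ψ m + 1)) - ∑ i, w (φ (ψ m + 1)) i)
            = (ρ (φ (ψ m + 1)))⁻¹ • Z (φ (ψ m + 1)) - ∑ i, D (ψ m) i := by
          intro m
          simp only [smul_sub, Finset.smul_sum, hDdef]
        rw [show (0:E) - σ = (0:ℝ) • z - σ by rw [zero_smul]]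
        exact Tendsto.congr (fun m => (this m).symm) (hZlim.sub hsumlim)
      have hnegσ : (0:E) - σ ∈ Lsub := by
        refine hLclosed.mem_of_tendsto hℓlim (Eventually.of_forall fun m => ?_)
        exact Submodule.smul_mem _ _ (hℓmem _)
      have hσL : σ ∈ Lsub := by
        have := Submodule.neg_mem Lsub hnegσ
        simpa using this
      have : σ ∈ Lsub ⊓ qsub := ⟨hσL, hσq⟩
      rwa [hcompl.inf_eq_bot, Submodule.mem_bot] at this
    -- derive the contradiction
    obtain ⟨istar, histar⟩ : ∃ i, dd i ≠ 0 := by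
      by_contra hall
      push_neg at hall
      rw [Finset.sum_congr rfl (fun i _ => by rw [hall i, norm_zero])] at hsum1
      simp at hsum1
    have hnegK : -dd istar ∈ K := by
      have h1 : dd istar + ∑ i ∈ Finset.univ.erase istar, dd i = 0 := by
        rw [Finset.add_sum_erase _ _ (Finset.mem_univ istar)]
        exact hσ
      have h2 : -dd istar = ∑ i ∈ Finset.univ.erase istar, dd i := by
        linear_combination (norm := module) -h1
      rw [h2, ← hK i₀]
      exact recCone_sum_mem (hconv i₀) _ _ fun i _ => by rw [hK i₀]; exact hddK i
    have hLmem : dd istar ∈ Lsub := ⟨hddK istar, hnegK⟩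
    have : dd istar ∈ Lsub ⊓ qsub := ⟨hLmem, hddq istar⟩
    rw [hcompl.inf_eq_bot, Submodule.mem_bot] at this
    exact histar this
  -- Step 2: extract a convergent subsequence of w
  obtain ⟨R, hR⟩ := hBdd
  have hwball : ∀ m, w m ∈ Metric.closedBall (0 : ι → E) (max R 0) := by
    intro m
    rw [mem_closedBall_zero_iff]
    rw [pi_norm_le_iff_of_nonneg (le_max_right R 0)]
    intro i
    exact le_trans (hwle m i) (le_trans (hR m) (le_max_left R 0))
  haveI : ProperSpace (ι → E) := by infer_instance
  obtain ⟨g, -, ψ, hψmono, hψlim⟩ :=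
    tendsto_subseq_of_bounded Metric.isBounded_closedBall hwball
  have hcoord : ∀ i, Tendsto (fun m => w (ψ m) i) atTop (𝓝 (g i)) := by
    intro i; exact (tendsto_pi_nhds.1 hψlim) i
  -- limit of the L-part
  set ℓ₀ : E := z - ∑ i, g i with hℓ₀def
  have hℓ₀L : ℓ₀ ∈ Lsub := by
    have hlim : Tendsto (fun m => Z (ψ m) - ∑ i, w (ψ m) i) atTop (𝓝 ℓ₀) := by
      rw [hℓ₀def]
      exact (hz.comp hψmono.tendsto_atTop).sub
        (tendsto_finset_sum _ fun i _ => hcoord i)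
    exact hLclosed.mem_of_tendsto hlim (Eventually.of_forall fun m => hℓmem _)
  -- the limits g i
  have hgpos : ∀ i, 0 < b i → (b i)⁻¹ • g i ∈ C i ∧ b i • ((b i)⁻¹ • g i) = g i := by
    intro i hbi
    constructor
    · have hev : ∀ᶠ m in atTop, b i / 2 < a (ψ m) i :=
        (hasub i ψ hψmono).eventually (eventually_gt_nhds (half_lt_self hbi))
      have hlim : Tendsto (fun m => (a (ψ m) i)⁻¹ • w (ψ m) i) atTop
          (𝓝 ((b i)⁻¹ • g i)) :=
        Tendsto.smul ((hasub i ψ hψmono).inv₀ hbi.ne') (hcoord i)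
      refine (hcl i).mem_of_tendsto hlim ?_
      filter_upwards [hev] with m hm
      have hane : a (ψ m) i ≠ 0 := by
        have h0 : 0 < a (ψ m) i := lt_of_le_of_lt (by positivity) hm
        exact h0.ne'
      rw [hwdef]
      simp only [inv_smul_smul₀ hane]
      exact hv' _ i
    · rw [smul_inv_smul₀ hbi.ne']
  have hgzero : ∀ i, ¬ 0 < b i → g i ∈ K := by
    intro i hbi
    have hbz : b i = 0 := le_antisymm (not_lt.1 hbi) (hbnn i)
    rw [← hK i]
    refine mem_recCone_of_tendsto_smul (hconv i) (hcl i) (hne i).some_mem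
      (τ := fun m => a (ψ m) i) (fun m => ha _ i) ?_
      (v := fun m => v' (ψ m) i) (fun m => hv' _ i) ?_
    · rw [← hbz]; exact hasub i ψ hψmono
    · exact hcoord i
  -- assemble the decomposition
  set κ : E := ℓ₀ + ∑ i ∈ Finset.univ.filter (fun i => ¬ 0 < b i), g i with hκdef
  have hκK : κ ∈ recCone (C i₀) := by
    rw [hκdef]
    refine recCone_add_mem (hconv i₀) ?_ ?_
    · rw [hK i₀]; exact hLK hℓ₀L
    · exact recCone_sum_mem (hconv i₀) _ _ fun i hi => by
        rw [hK i₀]; exact hgzero i (Finset.mem_filter.1 hi).2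
  set c : ι → E := fun i => if h : 0 < b i then (b i)⁻¹ • g i else (hne i).some
    with hcdef
  set cf : ι → E := fun i => if i = i₀ then c i₀ + (b i₀)⁻¹ • κ else c i with hcfdef
  have hcfC : ∀ i, cf i ∈ C i := by
    intro i
    simp only [hcfdef]
    by_cases hi : i = i₀
    · subst hi
      rw [if_pos rfl]
      have hc0 : c i ∈ C i := by
        simp only [hcdef]; rw [dif_pos hb0]; exact (hgpos i hb0).1
      exact hκK _ hc0 _ (inv_nonneg.2 hb0.le)
    · rw [if_neg hi]
      simp only [hcdef]
      by_cases hbi : 0 < b i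
      · rw [dif_pos hbi]; exact (hgpos i hbi).1
      · rw [dif_neg hbi]; exact (hne i).some_mem
  have hsumeq : ∑ i, b i • cf i = z := by
    have h1 : ∀ i, b i • cf i = b i • c i + (if i = i₀ then κ else 0) := by
      intro i
      simp only [hcfdef]
      by_cases hi : i = i₀
      · subst hi
        rw [if_pos rfl, if_pos rfl, smul_add, smul_inv_smul₀ hb0.ne']
      · rw [if_neg hi, if_neg hi, add_zero]
    have h2 : ∀ i, b i • c i = (if 0 < b i then g i else 0) := by
      intro i
      simp only [hcdef]
      by_cases hbi : 0 < b i
      · rw [dif_pos hbi, if_pos hbi, smul_inv_smul₀ hbi.ne']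
      · have hbz : b i = 0 := le_antisymm (not_lt.1 hbi) (hbnn i)
        rw [dif_neg hbi, if_neg hbi, hbz, zero_smul]
    calc ∑ i, b i • cf i
        = ∑ i, (b i • c i + (if i = i₀ then κ else 0)) :=
          Finset.sum_congr rfl fun i _ => h1 i
      _ = ∑ i, b i • c i + κ := by
          rw [Finset.sum_add_distrib, Finset.sum_ite_eq' Finset.univ i₀ (fun _ => κ)]
          simp
      _ = ∑ i, (if 0 < b i then g i else 0) + κ := by
          rw [Finset.sum_congr rfl fun i _ => h2 i]
      _ = ∑ i ∈ Finset.univ.filter (fun i => 0 < b i), g i + κ := by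
          rw [← Finset.sum_filter]
      _ = z := by
          rw [hκdef]
          have := Finset.sum_filter_add_sum_filter_not Finset.univ
            (fun i => 0 < b i) g
          rw [hℓ₀def]
          linear_combination (norm := module) this
  rw [Set.mem_fintype_sum]
  exact ⟨fun i => b i • cf i, fun i => Set.smul_mem_smul_set (hcfC i), hsumeq⟩

end KeyLimit

section Aux

variable {n k : ℕ} (C : Fin k → Set (Fin n → ℝ))

/-- The slice description of the Cayley embedding. -/
def TSet : Set ((Fin n → ℝ) × (Fin k → ℝ)) :=
  {p | (∀ i, 0 ≤ p.2 i) ∧ ∑ i, p.2 i = 1 ∧ p.1 ∈ ∑ i, p.2 i • C i}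

variable {C}

lemma sum_single_smul (y : Fin k → ℝ) :
    ∑ i, y i • (Pi.single i 1 : Fin k → ℝ) = y := by
  funext j
  rw [Finset.sum_apply]
  have h : ∀ i, (y i • (Pi.single i 1 : Fin k → ℝ)) j = if j = i then y i else 0 := by
    intro i
    rw [Pi.smul_apply, Pi.single_apply]
    by_cases h : j = i <;> simp [h]
  rw [Finset.sum_congr rfl fun i _ => h i]
  simp

lemma single_nonneg' (i j : Fin k) : (0:ℝ) ≤ (Pi.single i 1 : Fin k → ℝ) j := by
  rw [Pi.single_apply]; by_cases h : j = i <;> simp [h]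

lemma single_sum (i : Fin k) : ∑ j, (Pi.single i 1 : Fin k → ℝ) j = 1 := by
  simp [Pi.single_apply]

lemma single_int (i : Fin k) : ∀ j, ∃ z : ℤ, (Pi.single i 1 : Fin k → ℝ) j = z := by
  intro j
  rw [Pi.single_apply]
  by_cases h : j = i
  · exact ⟨1, by simp [h]⟩
  · exact ⟨0, by simp [h]⟩

lemma single_eq_single {i j : Fin k}
    (h : (Pi.single j 1 : Fin k → ℝ) = Pi.single i 1) : j = i := by
  by_contra hne
  have h2 := congrFun h j
  rw [Pi.single_apply, Pi.single_apply] at h2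
  simp [hne] at h2

lemma mem_sum_smul_iff {y : Fin k → ℝ} {x : Fin n → ℝ} :
    x ∈ ∑ i, y i • C i ↔
      ∃ v : Fin k → Fin n → ℝ, (∀ i, v i ∈ C i) ∧ ∑ i, y i • v i = x := by
  rw [Set.mem_fintype_sum]
  constructor
  · rintro ⟨g, hg, hgs⟩
    choose v hv hvg using fun i => hg i
    exact ⟨v, hv, by rw [Finset.sum_congr rfl fun i _ => hvg i]; exact hgs⟩
  · rintro ⟨v, hv, hvs⟩
    exact ⟨fun i => y i • v i, fun i => Set.smul_mem_smul_set (hv i), hvs⟩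

/-- convex combinations of points of the generators. -/
lemma comb_mem {S : Set ((Fin n → ℝ) × (Fin k → ℝ))} (hS : Convex ℝ S)
    (hgen : ∀ i x, x ∈ C i → ((x, Pi.single i 1) : (Fin n → ℝ) × (Fin k → ℝ)) ∈ S)
    (y : Fin k → ℝ) (hy0 : ∀ i, 0 ≤ y i) (hy1 : ∑ i, y i = 1)
    (u : Fin k → Fin n → ℝ) (hu : ∀ i, u i ∈ C i) :
    ((∑ i, y i • u i, y) : (Fin n → ℝ) × (Fin k → ℝ)) ∈ S := by
  have heq : ((∑ i, y i • u i, y) : (Fin n → ℝ) × (Fin k → ℝ))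
      = ∑ i, y i • ((u i, Pi.single i 1) : (Fin n → ℝ) × (Fin k → ℝ)) := by
    rw [Prod.ext_iff]
    constructor
    · rw [Prod.fst_sum]; rfl
    · rw [Prod.snd_sum]
      exact (sum_single_smul y).symm
  rw [heq]
  exact hS.sum_mem (fun i _ => hy0 i) hy1 fun i _ => hgen i (u i) (hu i)

lemma mem_CayleyQ_gen (i : Fin k) (x : Fin n → ℝ) (hx : x ∈ C i) :
    ((x, Pi.single i 1) : (Fin n → ℝ) × (Fin k → ℝ)) ∈ CayleyQ C :=
  subset_convexHull ℝ _ (Set.mem_iUnion.2 ⟨i, Set.mk_mem_prod hx rfl⟩)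

variable (hCne : ∀ i, (C i).Nonempty)

include hCne in
lemma TSet_convex (hCconv : ∀ i, Convex ℝ (C i)) : Convex ℝ (TSet C) := by
  classical
  rintro ⟨x, y⟩ ⟨hy0, hy1, hx⟩ ⟨x', y'⟩ ⟨hy0', hy1', hx'⟩ α β hα hβ hαβ
  simp only [TSet, Set.mem_setOf_eq] at *
  obtain ⟨v, hv, hvs⟩ := mem_sum_smul_iff.1 hx
  obtain ⟨v', hv', hvs'⟩ := mem_sum_smul_iff.1 hx'
  have hsnd : (α • ((x, y) : (Fin n → ℝ) × (Fin k → ℝ)) + β • (x', y')).2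
      = fun i => α * y i + β * y' i := rfl
  have hfst : (α • ((x, y) : (Fin n → ℝ) × (Fin k → ℝ)) + β • (x', y')).1
      = α • x + β • x' := rfl
  rw [hsnd, hfst]
  refine ⟨?_, ?_, ?_⟩
  · intro i
    have := hy0 i; have := hy0' i
    positivity
  · rw [Finset.sum_add_distrib, ← Finset.mul_sum, ← Finset.mul_sum, hy1, hy1']
    linarith
  · set μ : Fin k → ℝ := fun i => α * y i + β * y' i with hμdef
    have hμnn : ∀ i, 0 ≤ μ i := by
      intro i; have := hy0 i; have := hy0' i; positivity
    set vv : Fin k → Fin n → ℝ := fun i =>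
      if μ i = 0 then (hCne i).some
      else (α * y i / μ i) • v i + (β * y' i / μ i) • v' i with hvvdef
    have hvvC : ∀ i, vv i ∈ C i := by
      intro i
      simp only [hvvdef]
      by_cases hμ : μ i = 0
      · rw [if_pos hμ]; exact (hCne i).some_mem
      · rw [if_neg hμ]
        refine hCconv i (hv i) (hv' i)
          (div_nonneg (mul_nonneg hα (hy0 i)) (hμnn i))
          (div_nonneg (mul_nonneg hβ (hy0' i)) (hμnn i)) ?_
        field_simp
        rfl
    have hvveq : ∀ i, μ i • vv i = (α * y i) • v i + (β * y' i) • v' i := by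
      intro i
      simp only [hvvdef]
      by_cases hμ : μ i = 0
      · have hμ' : α * y i + β * y' i = 0 := hμ
        have ha1 : 0 ≤ α * y i := mul_nonneg hα (hy0 i)
        have ha2 : 0 ≤ β * y' i := mul_nonneg hβ (hy0' i)
        have h1 : α * y i = 0 := by linarith
        have h2 : β * y' i = 0 := by linarith
        rw [if_pos hμ, hμ, h1, h2, zero_smul, zero_smul, zero_smul, add_zero]
      · rw [if_neg hμ, smul_add, smul_smul, smul_smul,
          mul_div_assoc', mul_comm (μ i), mul_div_assoc, div_self hμ, mul_one,
          mul_div_assoc', mul_comm (μ i), mul_div_assoc, div_self hμ, mul_one]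
    rw [mem_sum_smul_iff]
    refine ⟨vv, hvvC, ?_⟩
    rw [Finset.sum_congr rfl fun i _ => hvveq i, Finset.sum_add_distrib,
      ← hvs, ← hvs', Finset.smul_sum, Finset.smul_sum]
    congr 1 <;> exact Finset.sum_congr rfl fun i _ => by rw [smul_smul]

include hCne in
lemma CayleyQ_eq_TSet (hCconv : ∀ i, Convex ℝ (C i)) : CayleyQ C = TSet C := by
  apply Set.Subset.antisymm
  · apply convexHull_min ?_ (TSet_convex hCne hCconv)
    rintro ⟨x, yy⟩ hp
    rw [Set.mem_iUnion] at hp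
    obtain ⟨i, hx, hy⟩ := hp
    rw [Set.mem_singleton_iff] at hy
    subst hy
    refine ⟨fun j => single_nonneg' i j, single_sum i, ?_⟩
    rw [mem_sum_smul_iff]
    refine ⟨fun j => if h : j = i then x else (hCne j).some, fun j => ?_, ?_⟩
    · by_cases h : j = i
      · simp only [dif_pos h]; subst h; exact hx
      · simp only [dif_neg h]; exact (hCne j).some_mem
    · rw [Finset.sum_eq_single i]
      · simp [Pi.single_apply]
      · intro j _ hj
        have h0 : (Pi.single i 1 : Fin k → ℝ) j = 0 := by
          rw [Pi.single_apply, if_neg hj]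
        show (Pi.single i 1 : Fin k → ℝ) j • _ = (0 : Fin n → ℝ)
        rw [h0, zero_smul]
      · intro h; exact absurd (Finset.mem_univ i) h
  · rintro ⟨x, y⟩ ⟨hy0, hy1, hx⟩
    obtain ⟨v, hv, hvs⟩ := mem_sum_smul_iff.1 hx
    have := comb_mem (convex_convexHull ℝ _) (fun i x hx => mem_CayleyQ_gen i x hx)
      y hy0 hy1 v hv
    rwa [hvs] at this

end Aux

section Main

variable {n k : ℕ} (hk : 0 < k) {C : Fin k → Set (Fin n → ℝ)}
  (hCne : ∀ i, (C i).Nonempty) (hCcl : ∀ i, IsClosed (C i))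
  (hCconv : ∀ i, Convex ℝ (C i)) (hCrec : ∀ i j, recCone (C i) = recCone (C j))

include hCconv in
lemma convex_setSum (b : Fin k → ℝ) : Convex ℝ (∑ i, b i • C i) := by
  refine Finset.sum_induction _ (fun (S : Set (Fin n → ℝ)) => Convex ℝ S)
    (fun a b ha hb => ha.add hb) ?_ (fun i _ => (hCconv i).smul (b i))
  rw [show (0 : Set (Fin n → ℝ)) = {0} from rfl]
  exact convex_singleton 0

include hCne in
lemma nonempty_setSum (b : Fin k → ℝ) : (∑ i, b i • C i).Nonempty :=
  ⟨∑ i, b i • (hCne i).some, mem_sum_smul_iff.2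
    ⟨fun i => (hCne i).some, fun i => (hCne i).some_mem, rfl⟩⟩

include hCne hCcl hCconv hCrec in
lemma closed_setSum (b : Fin k → ℝ) (hb : ∀ i, 0 ≤ b i) (i₀ : Fin k) (hbi : 0 < b i₀) :
    IsClosed (∑ i, b i • C i) := by
  have hseq : IsSeqClosed (∑ i, b i • C i) := by
    intro xs p hxs hlim
    choose v hv hvs using fun m => mem_sum_smul_iff.1 (hxs m)
    exact key_limit C hCne hCcl hCconv (recCone (C i₀)) (fun i => hCrec i i₀)
      (fun _ => b) b v (fun _ i => hb i) hv (fun i => tendsto_const_nhds)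
      ((tendsto_congr fun m => (hvs m).symm).1 hlim) i₀ hbi
  exact hseq.isClosed

lemma smul_setSum' (a : ℝ) (s : Finset (Fin k)) :
    a • (∑ i ∈ s, C i) = ∑ i ∈ s, a • C i := by
  classical
  induction s using Finset.induction_on with
  | empty => simpa using smul_zero a
  | @insert j s hj ih =>
    rw [Finset.sum_insert hj, Finset.sum_insert hj, smul_add, ih]

end Main

section QPart

variable {n k : ℕ} (hk : 0 < k) {C : Fin k → Set (Fin n → ℝ)}
  (hCne : ∀ i, (C i).Nonempty) (hCcl : ∀ i, IsClosed (C i))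
  (hCconv : ∀ i, Convex ℝ (C i)) (hCrec : ∀ i j, recCone (C i) = recCone (C j))
  {Q : Set ((Fin n → ℝ) × (Fin k → ℝ))} (hQc : IsClosed Q) (hQconv : Convex ℝ Q)
  (hQsub : Q ⊆ {p | (∀ i, 0 ≤ p.2 i) ∧ ∑ i, p.2 i = 1})
  (hQint : ∀ (x : Fin n → ℝ) (y : Fin k → ℝ), (∀ i, ∃ z : ℤ, y i = z) →
      ((x, y) ∈ Q ↔ ∃ i, y = Pi.single i 1 ∧ x ∈ C i))

include hQint in
lemma mem_Q_gen (i : Fin k) (x : Fin n → ℝ) (hx : x ∈ C i) :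
    ((x, Pi.single i 1) : (Fin n → ℝ) × (Fin k → ℝ)) ∈ Q :=
  (hQint x _ (single_int i)).2 ⟨i, rfl, hx⟩

include hQconv hQint in
lemma part1 : CayleyQ C ⊆ Q := by
  apply convexHull_min ?_ hQconv
  rintro ⟨x, yy⟩ hp
  rw [Set.mem_iUnion] at hp
  obtain ⟨i, hx, hy⟩ := hp
  rw [Set.mem_singleton_iff] at hy
  subst hy
  exact mem_Q_gen hQint i x hx

include hQconv hQint in
lemma part3 (y : Fin k → ℝ) (hy : (∀ i, 0 ≤ y i) ∧ ∑ i, y i = 1)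
    (x : Fin n → ℝ) (hx : x ∈ ∑ i, y i • C i) : (x, y) ∈ Q := by
  obtain ⟨v, hv, hvs⟩ := mem_sum_smul_iff.1 hx
  have := comb_mem hQconv (fun i x hx => mem_Q_gen hQint i x hx) y hy.1 hy.2 v hv
  rwa [hvs] at this

include hCne hQsub hQint in
/-- Upper bound for recession cones of sets between the generators and `Q`. -/
lemma recCone_sub (i₀ : Fin k) (S : Set ((Fin n → ℝ) × (Fin k → ℝ))) (hSQ : S ⊆ Q)
    (hSgen : ∀ i x, x ∈ C i → ((x, Pi.single i 1) : (Fin n → ℝ) × (Fin k → ℝ)) ∈ S) :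
    recCone S ⊆ {p : (Fin n → ℝ) × (Fin k → ℝ) | p.1 ∈ recCone (C i₀) ∧ p.2 = 0} := by
  rintro ⟨d, w⟩ hdw
  have hray : ∀ (j : Fin k) (x : Fin n → ℝ), x ∈ C j → ∀ t : ℝ, 0 ≤ t →
      ((x, Pi.single j 1) : (Fin n → ℝ) × (Fin k → ℝ)) + t • (d, w) ∈ Q := by
    intro j x hx t ht
    exact hSQ (hdw _ (hSgen j x hx) t ht)
  -- first, w = 0
  have hw0 : w = 0 := by
    have hwnn : ∀ j, 0 ≤ w j := by
      intro j
      by_contra hneg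
      push_neg at hneg
      have hwj : (0:ℝ) < -w j := by linarith
      have ht : (0:ℝ) ≤ 2 / -w j := (div_pos two_pos hwj).le
      have hthis := (hQsub (hray j _ (hCne j).some_mem _ ht)).1 j
      simp only [Prod.snd_add, Prod.smul_snd, Pi.add_apply, Pi.smul_apply,
        smul_eq_mul] at hthis
      rw [Pi.single_apply, if_pos rfl] at hthis
      have hmul : 2 / -w j * w j = -2 := by field_simp; rw [div_self hneg.ne]
      rw [hmul] at hthis
      linarith
    have hsum : ∑ j, w j = 0 := by
      have h1 := (hQsub (hray i₀ _ (hCne i₀).some_mem 1 zero_le_one)).2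
      simp only [Prod.snd_add, Prod.smul_snd, Pi.add_apply, Pi.smul_apply,
        smul_eq_mul, one_mul] at h1
      rw [Finset.sum_add_distrib, single_sum i₀] at h1
      linarith
    funext j
    have := (Finset.sum_eq_zero_iff_of_nonneg (fun j _ => hwnn j)).1 hsum j
      (Finset.mem_univ j)
    simpa using this
  subst hw0
  refine ⟨?_, rfl⟩
  intro x hx t ht
  have hmem := hray i₀ x hx t ht
  have heq : ((x, Pi.single i₀ 1) : (Fin n → ℝ) × (Fin k → ℝ)) + t • (d, (0 : Fin k → ℝ))
      = (x + t • d, Pi.single i₀ 1) := by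
    rw [Prod.ext_iff]
    constructor
    · rfl
    · show Pi.single i₀ 1 + t • (0 : Fin k → ℝ) = Pi.single i₀ 1
      rw [smul_zero, add_zero]
  rw [heq] at hmem
  obtain ⟨i, hi, hmem2⟩ := (hQint _ _ (single_int i₀)).1 hmem
  rw [single_eq_single hi]
  exact hmem2

include hCne hQc hQconv hQint in
lemma recCone_Q_sup (i₀ : Fin k) :
    {p : (Fin n → ℝ) × (Fin k → ℝ) | p.1 ∈ recCone (C i₀) ∧ p.2 = 0} ⊆ recCone Q := by
  rintro ⟨d, w⟩ ⟨hd, hw⟩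
  simp only at hd hw
  subst hw
  apply mem_recCone_of_ray hQconv hQc
    (p := (((hCne i₀).some, Pi.single i₀ 1) : (Fin n → ℝ) × (Fin k → ℝ)))
  intro t ht
  have heq : (((hCne i₀).some, Pi.single i₀ 1) : (Fin n → ℝ) × (Fin k → ℝ))
      + t • (d, (0 : Fin k → ℝ)) = ((hCne i₀).some + t • d, Pi.single i₀ 1) := by
    rw [Prod.ext_iff]
    exact ⟨rfl, by show Pi.single i₀ 1 + t • (0 : Fin k → ℝ) = _; rw [smul_zero, add_zero]⟩
  rw [heq]
  exact mem_Q_gen hQint i₀ _ (hd _ (hCne i₀).some_mem t ht)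

include hCne hCconv hCrec in
lemma recCone_Cayley_sup (i₀ : Fin k) :
    {p : (Fin n → ℝ) × (Fin k → ℝ) | p.1 ∈ recCone (C i₀) ∧ p.2 = 0}
      ⊆ recCone (CayleyQ C) := by
  rintro ⟨d, w⟩ ⟨hd, hw⟩
  simp only at hd hw
  subst hw
  rw [CayleyQ_eq_TSet hCne hCconv]
  rintro ⟨x, y⟩ ⟨hy0, hy1, hx⟩ t ht
  have heq : ((x, y) : (Fin n → ℝ) × (Fin k → ℝ)) + t • (d, (0 : Fin k → ℝ))
      = (x + t • d, y) := by
    rw [Prod.ext_iff]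
    exact ⟨rfl, by show y + t • (0 : Fin k → ℝ) = y; rw [smul_zero, add_zero]⟩
  rw [heq]
  refine ⟨hy0, hy1, ?_⟩
  obtain ⟨v, hv, hvs⟩ := mem_sum_smul_iff.1 hx
  refine mem_sum_smul_iff.2 ⟨fun i => v i + t • d, fun i => ?_, ?_⟩
  · exact (hCrec i₀ i ▸ hd) (v i) (hv i) t ht
  · have : ∀ i, y i • (v i + t • d) = y i • v i + y i • t • d := fun i => smul_add _ _ _
    rw [Finset.sum_congr rfl fun i _ => this i, Finset.sum_add_distrib, hvs,
      ← Finset.sum_smul, hy1, one_smul]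

include hk hCne hCcl hCconv hCrec hQconv hQsub hQint in
lemma stepA
    (hcc : ∀ x : Fin n → ℝ, (x, fun _ => 1 / (k : ℝ)) ∈ Q →
      x ∈ ((1 : ℝ) / k) • ∑ i, C i)
    (y : Fin k → ℝ) (hy0 : ∀ i, 0 < y i) (hy1 : ∑ i, y i = 1)
    (xb : Fin n → ℝ) (hxb : (xb, y) ∈ Q) : xb ∈ ∑ i, y i • C i := by
  classical
  by_contra hnot
  have hkR : (0:ℝ) < k := Nat.cast_pos.2 hk
  have hSconv : Convex ℝ (∑ i, y i • C i) := convex_setSum hCconv y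
  have hScl : IsClosed (∑ i, y i • C i) :=
    closed_setSum hCne hCcl hCconv hCrec y (fun i => (hy0 i).le) ⟨0, hk⟩ (hy0 _)
  obtain ⟨f, u, hfu, hux⟩ := geometric_hahn_banach_closed_point hSconv hScl hnot
  have hfeval : ∀ w : Fin k → Fin n → ℝ,
      f (∑ i, y i • w i) = ∑ i, y i * f (w i) := by
    intro w
    rw [map_sum]
    exact Finset.sum_congr rfl fun i _ => by rw [map_smul]; rfl
  have hmemS : ∀ w : Fin k → Fin n → ℝ, (∀ i, w i ∈ C i) →
      (∑ i, y i • w i) ∈ ∑ i, y i • C i := fun w hw => mem_sum_smul_iff.2 ⟨w, hw, rfl⟩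
  -- the image of each `C i` under `f` is bounded above
  have hgbdd : ∀ i, BddAbove (f '' C i) := by
    intro i
    by_contra hb
    rw [not_bddAbove_iff] at hb
    set base : Fin k → Fin n → ℝ := fun j => (hCne j).some with hbase
    set cc : ℝ := ∑ j ∈ Finset.univ.erase i, y j * f (base j) with hcc2
    obtain ⟨r, ⟨ξ, hξC, hξr⟩, hrgt⟩ := hb ((u - cc) / y i)
    set w : Fin k → Fin n → ℝ := fun j => if j = i then ξ else base j with hwdef
    have hwC : ∀ j, w j ∈ C j := by
      intro j
      simp only [hwdef]
      by_cases h : j = i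
      · rw [if_pos h]; subst h; exact hξC
      · rw [if_neg h]; exact (hCne j).some_mem
    have hlt := hfu _ (hmemS w hwC)
    rw [hfeval] at hlt
    have hsplit : ∑ j, y j * f (w j) = y i * f ξ + cc := by
      rw [← Finset.add_sum_erase _ _ (Finset.mem_univ i)]
      congr 1
      · simp only [hwdef, if_pos rfl]
      · refine Finset.sum_congr rfl fun j hj => ?_
        have : j ≠ i := (Finset.mem_erase.1 hj).1
        simp only [hwdef, if_neg this]
    rw [hsplit] at hlt
    have hfξ : f ξ < (u - cc) / y i := by
      rw [lt_div_iff₀ (hy0 i)]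
      linarith [mul_comm (f ξ) (y i)]
    rw [hξr] at hfξ
    linarith
  set g : Fin k → ℝ := fun i => sSup (f '' C i) with hgdef
  have hgle : ∀ i, ∀ ξ ∈ C i, f ξ ≤ g i := fun i ξ hξ =>
    le_csSup (hgbdd i) ⟨ξ, hξ, rfl⟩
  have hεpick : ∀ ε : ℝ, 0 < ε → ∃ w : Fin k → Fin n → ℝ,
      (∀ i, w i ∈ C i) ∧ ∀ i, g i - ε < f (w i) := by
    intro ε hε
    have hpick : ∀ i, ∃ ξ, ξ ∈ C i ∧ g i - ε < f ξ := by
      intro i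
      obtain ⟨r, hr, hlt⟩ := exists_lt_of_lt_csSup ((hCne i).image f)
        (sub_lt_self (g i) hε)
      obtain ⟨ξ, hξ, rfl⟩ := hr
      exact ⟨ξ, hξ, hlt⟩
    choose w hw1 hw2 using hpick
    exact ⟨w, hw1, hw2⟩
  have hclaim1 : ∑ i, y i * g i ≤ u := by
    apply le_of_forall_pos_le_add
    intro ε hε
    obtain ⟨w, hwC, hwf⟩ := hεpick ε hε
    have h1 := hfu _ (hmemS w hwC)
    rw [hfeval] at h1
    have h2 : ∑ i, y i * (g i - ε) ≤ ∑ i, y i * f (w i) :=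
      Finset.sum_le_sum fun i _ => mul_le_mul_of_nonneg_left (hwf i).le (hy0 i).le
    have h3 : ∑ i, y i * (g i - ε) = ∑ i, y i * g i - ε := by
      have : ∀ i, y i * (g i - ε) = y i * g i - y i * ε := fun i => by ring
      rw [Finset.sum_congr rfl fun i _ => this i, Finset.sum_sub_distrib,
        ← Finset.sum_mul, hy1, one_mul]
    linarith
  have hyle1 : ∀ i, y i ≤ 1 := by
    intro i
    have h1 : ∑ j ∈ Finset.univ.erase i, y j ≥ 0 :=
      Finset.sum_nonneg fun j _ => (hy0 j).le
    have h2 : y i + ∑ j ∈ Finset.univ.erase i, y j = 1 := by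
      rw [Finset.add_sum_erase _ _ (Finset.mem_univ i)]; exact hy1
    linarith
  have hsub1 : ∑ i, (1 - y i) = (k:ℝ) - 1 := by
    rw [Finset.sum_sub_distrib, hy1, Finset.sum_const, Finset.card_univ,
      Fintype.card_fin, nsmul_eq_mul, mul_one]
  have hclaim2 : f xb ≤ ∑ i, y i * g i := by
    apply le_of_forall_pos_le_add
    intro ε hε
    have hεk : 0 < ε / k := div_pos hε hkR
    obtain ⟨w, hwC, hwf⟩ := hεpick (ε / k) hεk
    -- build the central point as a convex combination in Q
    set P' : Option (Fin k) → (Fin n → ℝ) × (Fin k → ℝ) :=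
      fun o => o.elim ((xb, y) : (Fin n → ℝ) × (Fin k → ℝ))
        (fun i => ((w i, Pi.single i 1) : (Fin n → ℝ) × (Fin k → ℝ))) with hP'def
    set W : Option (Fin k) → ℝ :=
      fun o => o.elim (1 / (k:ℝ)) (fun i => (1 - y i) / k) with hWdef
    have hkne : (k:ℝ) ≠ 0 := hkR.ne'
    have hW0 : ∀ o, 0 ≤ W o := by
      rintro (_ | i)
      · simp only [hWdef, Option.elim]
        positivity
      · simp only [hWdef, Option.elim]
        exact div_nonneg (by linarith [hyle1 i]) hkR.le
    have hW1 : ∑ o, W o = 1 := by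
      rw [Fintype.sum_option]
      simp only [hWdef, Option.elim]
      rw [← Finset.sum_div, hsub1, ← add_div,
        show (1:ℝ) + ((k:ℝ) - 1) = (k:ℝ) by ring, div_self hkne]
    have hPQ : ∀ o, P' o ∈ Q := by
      rintro (_ | i)
      · exact hxb
      · exact mem_Q_gen hQint i (w i) (hwC i)
    have hcomb := hQconv.sum_mem (fun o _ => hW0 o) hW1 (fun o _ => hPQ o)
    -- identify the second coordinate
    set p : (Fin n → ℝ) × (Fin k → ℝ) := ∑ o, W o • P' o with hpdef
    have hp2 : p.2 = fun _ => 1 / (k:ℝ) := by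
      rw [hpdef, Prod.snd_sum]
      funext j
      rw [Fintype.sum_option]
      simp only [hWdef, hP'def, Option.elim]
      rw [Pi.add_apply, Finset.sum_apply]
      simp only [Prod.smul_snd]
      have hterm : ∀ i, (((1 - y i) / k) • (Pi.single i 1 : Fin k → ℝ)) j
          = if j = i then (1 - y i) / k else 0 := by
        intro i
        rw [Pi.smul_apply, Pi.single_apply]
        by_cases h : j = i <;> simp [h]
      rw [Finset.sum_congr rfl fun i _ => hterm i, Finset.sum_ite_eq Finset.univ j]
      simp only [Finset.mem_univ, if_pos]
      show 1 / (k:ℝ) * y j + (1 - y j) / k = 1 / k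
      rw [one_div, inv_mul_eq_div, ← add_div,
        show y j + (1 - y j) = 1 by ring, one_div]
    have hp1 : p.1 = (1 / (k:ℝ)) • xb + ∑ i, ((1 - y i) / k) • w i := by
      rw [hpdef, Prod.fst_sum, Fintype.sum_option]
      rfl
    have hpQ : (p.1, fun _ => 1 / (k:ℝ)) ∈ Q := by
      have : p = (p.1, fun _ => 1 / (k:ℝ)) := by
        rw [Prod.ext_iff]; exact ⟨rfl, hp2⟩
      rw [← this]; exact hcomb
    obtain ⟨sw, hsw, hswe⟩ := hcc p.1 hpQ
    obtain ⟨ww, hww, hwws⟩ := (Set.mem_fintype_sum _ _).1 hsw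
    -- two evaluations of f p.1
    have hfp1 : f p.1 = (f xb + ∑ i, (1 - y i) * f (w i)) / k := by
      rw [hp1, map_add, map_sum, map_smul]
      have : ∀ i, f (((1 - y i) / k) • w i) = (1 - y i) * f (w i) / k := by
        intro i
        rw [map_smul]
        show (1 - y i) / k * f (w i) = _
        ring
      rw [Finset.sum_congr rfl fun i _ => this i, ← Finset.sum_div]
      show (1:ℝ)/k * f xb + _ = _
      ring
    have hfp2 : f p.1 = (∑ i, f (ww i)) / k := by
      rw [← hswe, map_smul, ← hwws, map_sum]
      show (1:ℝ)/k * _ = _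
      ring
    have hnum : f xb + ∑ i, (1 - y i) * f (w i) = ∑ i, f (ww i) := by
      have := hfp1.symm.trans hfp2
      field_simp at this
      linarith
    have hle1 : ∑ i, f (ww i) ≤ ∑ i, g i :=
      Finset.sum_le_sum fun i _ => hgle i (ww i) (hww i)
    have hle2 : ∑ i, (1 - y i) * (g i - ε / k) ≤ ∑ i, (1 - y i) * f (w i) :=
      Finset.sum_le_sum fun i _ =>
        mul_le_mul_of_nonneg_left (hwf i).le (by linarith [hyle1 i])
    have hexp : ∑ i, (1 - y i) * (g i - ε / k)
        = ∑ i, g i - ∑ i, y i * g i - (ε / k) * ((k:ℝ) - 1) := by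
      have : ∀ i, (1 - y i) * (g i - ε / k)
          = (g i - y i * g i) - (ε / k) * (1 - y i) := fun i => by ring
      rw [Finset.sum_congr rfl fun i _ => this i, Finset.sum_sub_distrib,
        Finset.sum_sub_distrib, ← Finset.mul_sum, hsub1]
    have hfin : (ε / k) * ((k:ℝ) - 1) ≤ ε := by
      have he : (ε / k) * ((k:ℝ) - 1) = ε - ε / k := by
        field_simp
      rw [he]
      have : 0 ≤ ε / k := hεk.le
      linarith
    linarith
  linarith

include hk hCne hCcl hCconv hCrec hQconv hQsub hQint in
lemma stepB
    (hcc : ∀ x : Fin n → ℝ, (x, fun _ => 1 / (k : ℝ)) ∈ Q →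
      x ∈ ((1 : ℝ) / k) • ∑ i, C i)
    (y : Fin k → ℝ) (hy0 : ∀ i, 0 ≤ y i) (hy1 : ∑ i, y i = 1)
    (xb : Fin n → ℝ) (hxb : (xb, y) ∈ Q) : xb ∈ ∑ i, y i • C i := by
  classical
  have hkR : (0:ℝ) < k := Nat.cast_pos.2 hk
  -- central point of Q
  set cx : Fin n → ℝ := ∑ i, (1/(k:ℝ)) • (hCne i).some with hcxdef
  have hunif0 : ∀ i : Fin k, 0 ≤ (fun (_ : Fin k) => 1/(k:ℝ)) i := fun i => by positivity
  have hunif1 : ∑ _i : Fin k, 1/(k:ℝ) = 1 := by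
    rw [Finset.sum_const, Finset.card_univ, Fintype.card_fin, nsmul_eq_mul,
      mul_one_div, div_self hkR.ne']
  have hcQ : ((cx, fun _ => 1/(k:ℝ)) : (Fin n → ℝ) × (Fin k → ℝ)) ∈ Q :=
    comb_mem hQconv (fun i x hx => mem_Q_gen hQint i x hx) (fun _ => 1/(k:ℝ))
      hunif0 hunif1 (fun i => (hCne i).some) (fun i => (hCne i).some_mem)
  set t : ℕ → ℝ := fun m => ((m:ℝ) + 2)⁻¹ with htdef
  have ht0 : ∀ m, 0 < t m := fun m => by positivity
  have ht1 : ∀ m, t m ≤ 1 := by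
    intro m
    rw [htdef]
    rw [inv_le_one_iff₀]
    right
    have : (0:ℝ) ≤ (m:ℝ) := Nat.cast_nonneg m
    linarith
  have htlim : Tendsto t atTop (𝓝 0) := by
    apply tendsto_inv_atTop_zero.comp
    have := tendsto_atTop_add_const_right atTop (2:ℝ) tendsto_natCast_atTop_atTop
    exact this
  set ym : ℕ → Fin k → ℝ := fun m i => (1 - t m) * y i + t m * (1/(k:ℝ)) with hymdef
  have hym0 : ∀ m i, 0 < ym m i := by
    intro m i
    have h1 : 0 ≤ (1 - t m) * y i := mul_nonneg (by linarith [ht1 m]) (hy0 i)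
    have h2 : 0 < t m * (1/(k:ℝ)) := by positivity
    simp only [hymdef]
    linarith
  have hym1 : ∀ m, ∑ i, ym m i = 1 := by
    intro m
    simp only [hymdef]
    rw [Finset.sum_add_distrib, ← Finset.mul_sum, hy1, Finset.sum_const,
      Finset.card_univ, Fintype.card_fin, nsmul_eq_mul]
    field_simp
    ring
  have hqm : ∀ m, (((1 - t m) • xb + t m • cx, ym m) :
      (Fin n → ℝ) × (Fin k → ℝ)) ∈ Q := by
    intro m
    have hmem := hQconv hxb hcQ (by linarith [ht1 m] : (0:ℝ) ≤ 1 - t m)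
      (ht0 m).le (by ring)
    have heq : (1 - t m) • ((xb, y) : (Fin n → ℝ) × (Fin k → ℝ))
        + t m • ((cx, fun _ => 1/(k:ℝ)) : (Fin n → ℝ) × (Fin k → ℝ))
        = (((1 - t m) • xb + t m • cx, ym m) : (Fin n → ℝ) × (Fin k → ℝ)) := by
      rw [Prod.ext_iff]
      exact ⟨rfl, rfl⟩
    rwa [heq] at hmem
  have hslice : ∀ m, (1 - t m) • xb + t m • cx ∈ ∑ i, ym m i • C i := fun m =>
    stepA hk hCne hCcl hCconv hCrec hQconv hQsub hQint hcc (ym m) (hym0 m)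
      (hym1 m) _ (hqm m)
  choose v hv hvs using fun m => mem_sum_smul_iff.1 (hslice m)
  obtain ⟨i₀, -, hi₀⟩ := Finset.exists_ne_zero_of_sum_ne_zero
    (by rw [hy1]; exact one_ne_zero : ∑ i, y i ≠ 0)
  have hi₀pos : 0 < y i₀ := lt_of_le_of_ne (hy0 i₀) (Ne.symm hi₀)
  refine key_limit C hCne hCcl hCconv (recCone (C i₀)) (fun i => hCrec i i₀)
    (fun m => ym m) y v (fun m i => (hym0 m i).le) hv ?_ ?_ i₀ hi₀pos
  · intro i
    have h1 : Tendsto (fun m => (1 - t m) * y i) atTop (𝓝 ((1 - 0) * y i)) :=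
      ((tendsto_const_nhds (x := (1:ℝ))).sub htlim).mul tendsto_const_nhds
    have h2 : Tendsto (fun m => t m * (1/(k:ℝ))) atTop (𝓝 (0 * (1/(k:ℝ)))) :=
      htlim.mul tendsto_const_nhds
    have h4 := h1.add h2
    have h5 : Tendsto (fun m => ym m i) atTop (𝓝 ((1 - 0) * y i + 0 * (1/(k:ℝ)))) := h4
    simpa using h5
  · have h1 : Tendsto (fun m => (1 - t m) • xb) atTop (𝓝 ((1 - (0:ℝ)) • xb)) :=
      (Tendsto.sub (tendsto_const_nhds (x := (1:ℝ))) htlim).smul tendsto_const_nhds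
    have h2 : Tendsto (fun m => t m • cx) atTop (𝓝 ((0:ℝ) • cx)) :=
      htlim.smul tendsto_const_nhds
    have h3 := h1.add h2
    have heq : ∀ m, ∑ i, ym m i • v m i = (1 - t m) • xb + t m • cx := hvs
    rw [tendsto_congr heq]
    simpa using h3

end QPart



/-- Proposition 6: any closed convex set `Q ⊆ ℝⁿ × Δᵏ` that is a valid formulation of
`x ∈ ⋃ᵢ Cⁱ` contains `Q(C¹,…,Cᵏ)`, has the same recession cone, contains all Minkowski
combinations, and equals `Q(C¹,…,Cᵏ)` iff its slices agree with the Minkowski sums, iff the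
central slice does. -/
theorem stmt18 {n k : ℕ} (hk : 0 < k) (C : Fin k → Set (Fin n → ℝ)) (hC : Admissible C)
    (Q : Set ((Fin n → ℝ) × (Fin k → ℝ))) (hQc : IsClosed Q) (hQconv : Convex ℝ Q)
    (hQsub : Q ⊆ {p | (∀ i, 0 ≤ p.2 i) ∧ ∑ i, p.2 i = 1})
    (hQint : ∀ (x : Fin n → ℝ) (y : Fin k → ℝ), (∀ i, ∃ z : ℤ, y i = z) →
      ((x, y) ∈ Q ↔ ∃ i, y = Pi.single i 1 ∧ x ∈ C i)) :
    (CayleyQ C ⊆ Q) ∧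
    (recCone Q = recCone (CayleyQ C) ∧
      recCone Q = {p : (Fin n → ℝ) × (Fin k → ℝ) |
        p.1 ∈ recCone (C ⟨0, hk⟩) ∧ p.2 = 0}) ∧
    (∀ y : Fin k → ℝ, ((∀ i, 0 ≤ y i) ∧ ∑ i, y i = 1) →
      ∀ x ∈ ∑ i, y i • C i, (x, y) ∈ Q) ∧
    ((Q = CayleyQ C ↔
        ∀ y : Fin k → ℝ, ((∀ i, 0 ≤ y i) ∧ ∑ i, y i = 1) →
          ∀ x : Fin n → ℝ, (x, y) ∈ Q → x ∈ ∑ i, y i • C i) ∧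
     (Q = CayleyQ C ↔
        ∀ x : Fin n → ℝ, (x, fun _ => 1 / (k : ℝ)) ∈ Q →
          x ∈ ((1 : ℝ) / k) • ∑ i, C i)) := by
  obtain ⟨hCne, hCcl, hCconv, hCrec⟩ := hC
  have hP1 : CayleyQ C ⊆ Q := part1 hQconv hQint
  have hTeq : CayleyQ C = TSet C := CayleyQ_eq_TSet hCne hCconv
  have hrecQ : recCone Q = {p : (Fin n → ℝ) × (Fin k → ℝ) |
      p.1 ∈ recCone (C ⟨0, hk⟩) ∧ p.2 = 0} :=
    Set.Subset.antisymm
      (recCone_sub hCne hQsub hQint ⟨0, hk⟩ Q Set.Subset.rfl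
        (fun i x hx => mem_Q_gen hQint i x hx))
      (recCone_Q_sup hCne hQc hQconv hQint ⟨0, hk⟩)
  have hrecC : recCone (CayleyQ C) = {p : (Fin n → ℝ) × (Fin k → ℝ) |
      p.1 ∈ recCone (C ⟨0, hk⟩) ∧ p.2 = 0} :=
    Set.Subset.antisymm
      (recCone_sub hCne hQsub hQint ⟨0, hk⟩ (CayleyQ C) hP1
        (fun i x hx => mem_CayleyQ_gen i x hx))
      (recCone_Cayley_sup hCne hCconv hCrec ⟨0, hk⟩)
  have hiff1 : Q = CayleyQ C ↔
      ∀ y : Fin k → ℝ, ((∀ i, 0 ≤ y i) ∧ ∑ i, y i = 1) →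
        ∀ x : Fin n → ℝ, (x, y) ∈ Q → x ∈ ∑ i, y i • C i := by
    constructor
    · intro h y _hy x hx
      rw [h, hTeq] at hx
      exact hx.2.2
    · intro h
      refine Set.Subset.antisymm ?_ hP1
      rintro ⟨x, y⟩ hxy
      have hy := hQsub hxy
      rw [hTeq]
      exact ⟨hy.1, hy.2, h y ⟨hy.1, hy.2⟩ x hxy⟩
  refine ⟨hP1, ⟨hrecQ.trans hrecC.symm, hrecQ⟩,
    (fun y hy x hx => part3 hQconv hQint y hy x hx), hiff1, ?_⟩
  rw [hiff1]
  constructor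
  · intro h x hx
    have h1 := h (fun _ => 1 / (k:ℝ))
      ⟨fun i => by positivity, by
        rw [Finset.sum_const, Finset.card_univ, Fintype.card_fin, nsmul_eq_mul,
          mul_one_div, div_self (Nat.cast_pos.2 hk).ne']⟩ x hx
    have h2 : ((1:ℝ)/(k:ℝ)) • ∑ i, C i = ∑ i, ((1:ℝ)/(k:ℝ)) • C i :=
      smul_setSum' _ _
    rw [h2]
    exact h1
  · intro hcc y hy x hx
    exact stepB hk hCne hCcl hCconv hCrec hQconv hQsub hQint hcc y hy.1 hy.2 x hx
end
end
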